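/- arXiv:1806.07631 — 3 statements merged into one kernel-verified Lean document; each statement's English description precedes it below -/
import Mathlib

section
/- Let n ≥ 1 be an integer and let ε > 0, θ > 0 be real numbers. Suppose f : {0,1,…,n} → ℝ is nonnegative, f(n) = 1, and f satisfies the eigenvalue equations of the birth-and-death chain which jumps from k to k+1 at rate ε and from k to k−1 at rate 1, namely ε·(f(1) − f(0)) = θ·f(0), and ε·(f(k+1) − f(k)) + (f(k−1) − f(k)) = θ·f(k) for all 1 ≤ k ≤ n−1. Then f(0) ≤ εⁿ/θ. -/
/-- Lemma 3.1: estimate for the Laplace transform of the hitting time of `n` for the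
asymmetric birth-and-death chain jumping up at rate `ε` and down at rate `1`. -/
theorem stmt_0 (n : ℕ) (hn : 1 ≤ n) (ε θ : ℝ) (hε : 0 < ε) (hθ : 0 < θ)
    (f : ℕ → ℝ) (hf0 : ∀ k, k ≤ n → 0 ≤ f k) (hfn : f n = 1)
    (hbd : ε * (f 1 - f 0) = θ * f 0)
    (hin : ∀ k, 1 ≤ k → k ≤ n - 1 →
      ε * (f (k + 1) - f k) + (f (k - 1) - f k) = θ * f k) :
    f 0 ≤ ε ^ n / θ := by
  have key : ∀ k, k ≤ n - 1 → θ * f 0 ≤ ε ^ (k + 1) * (f (k + 1) - f k) := by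
    intro k
    induction k with
    | zero => intro _; rw [pow_one]; linarith
    | succ k ih =>
      intro hk
      have hk' : k ≤ n - 1 := by omega
      have h1 := ih hk'
      have h2 := hin (k + 1) (by omega) hk
      simp only [Nat.add_sub_cancel] at h2
      have hfk1 : 0 ≤ f (k + 1) := hf0 _ (by omega)
      have hp : (0:ℝ) < ε ^ (k + 1) := pow_pos hε _
      have : ε ^ (k + 2) * (f (k + 2) - f (k + 1)) =
          ε ^ (k + 1) * (f (k + 1) - f k) + θ * f (k + 1) * ε ^ (k + 1) := by
        have : ε * (f (k + 2) - f (k + 1)) = f (k + 1) - f k + θ * f (k + 1) := by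
          linarith
        calc ε ^ (k + 2) * (f (k + 2) - f (k + 1))
            = ε ^ (k + 1) * (ε * (f (k + 2) - f (k + 1))) := by ring
          _ = _ := by rw [this]; ring
      nlinarith [mul_nonneg (mul_nonneg hθ.le hfk1) hp.le]
  have h := key (n - 1) le_rfl
  have hne : n - 1 + 1 = n := by omega
  rw [hne] at h
  have hfn1 : 0 ≤ f (n - 1) := hf0 _ (by omega)
  have hp : (0:ℝ) < ε ^ n := pow_pos hε _
  rw [hfn] at h
  rw [le_div_iff₀ hθ]
  nlinarith
end

section
/- There exists a finite constant C₀, depending only on h, such that for all β ≥ C₀ and all integers L ≥ 2(n₀+2) with |Λ_L|·e^{−2β} ≤ 1/2, one has Σ_{σ ∈ V₋₁, σ ≠ -1} e^{−β(ℍ(σ) − ℍ(-1))} ≤ C₀·|Λ_L|·e^{−2β}; equivalently, μ_β(V₋₁ \ {-1}) / μ_β(-1) ≤ C₀·|Λ_L|·e^{−2β}, where μ_β is the Gibbs measure. -/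
open Classical Finset Filter Topology

noncomputable section

namespace BC

/-- Sites of the two-dimensional discrete torus of side `L`. -/
abbrev Site (L : ℕ) := ZMod L × ZMod L

/-- Spin configurations: a spin `s : Fin 3` at a site encodes the value `s - 1 ∈ {-1,0,1}`. -/
abbrev Cfg (L : ℕ) := Site L → Fin 3

/-- The spin value in `{-1, 0, 1}` encoded by an element of `Fin 3`. -/
def sval (s : Fin 3) : ℤ := (s : ℤ) - 1

/-- The critical length `n₀ = ⌊2/h⌋`. -/
def n0 (h : ℝ) : ℕ := ⌊(2 : ℝ) / h⌋₊

/-- The configuration `-1` with all spins equal to `-1`. -/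
def cminus (L : ℕ) : Cfg L := fun _ => 0

/-- The configuration `0` with all spins equal to `0`. -/
def czero (L : ℕ) : Cfg L := fun _ => 1

/-- The configuration `+1` with all spins equal to `+1`. -/
def cplus (L : ℕ) : Cfg L := fun _ => 2

/-- Nearest-neighbour relation on the torus. -/
def nbr (L : ℕ) (x y : Site L) : Prop :=
  y = x + (1, 0) ∨ y = x - (1, 0) ∨ y = x + (0, 1) ∨ y = x - (0, 1)

/-- The four nearest neighbours of a site, as a finite set. -/
def nbrFinset (L : ℕ) (x : Site L) : Finset (Site L) :=
  {x + (1, 0), x - (1, 0), x + (0, 1), x - (0, 1)}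

/-- The torus viewed as a simple graph with nearest-neighbour adjacency. -/
def torusGraph (L : ℕ) : SimpleGraph (Site L) where
  Adj x y := x ≠ y ∧ nbr L x y
  symm := by
    constructor
    rintro x y ⟨hne, hn⟩
    refine ⟨hne.symm, ?_⟩
    unfold nbr at hn ⊢
    rcases hn with h1 | h1 | h1 | h1 <;> subst h1 <;> simp
  loopless := by constructor; rintro x ⟨hne, -⟩; exact hne rfl

/-- The `s × t` rectangle of sites with lower-left corner `a`. -/
def rect (L : ℕ) (a : Site L) (s t : ℕ) : Finset (Site L) :=
  (Finset.range s ×ˢ Finset.range t).image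
    (fun p => (a.1 + (p.1 : ZMod L), a.2 + (p.2 : ZMod L)))

/-- The four corners of the `s × t` rectangle with lower-left corner `a`. -/
def corners (L : ℕ) (a : Site L) (s t : ℕ) : Finset (Site L) :=
  {(a.1, a.2), (a.1 + ((s - 1 : ℕ) : ZMod L), a.2),
   (a.1, a.2 + ((t - 1 : ℕ) : ZMod L)),
   (a.1 + ((s - 1 : ℕ) : ZMod L), a.2 + ((t - 1 : ℕ) : ZMod L))}

/-- `S` is an `n × (n+1)` rectangle (in either orientation). -/
def isCritRect (L n : ℕ) (S : Finset (Site L)) : Prop :=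
  ∃ a : Site L, S = rect L a n (n + 1) ∨ S = rect L a (n + 1) n

/-- `S` is an `n × (n+1)` rectangle plus an extra site attached to a longest side. -/
def critRl (L n : ℕ) (S : Finset (Site L)) : Prop :=
  ∃ (a : Site L) (i : ℕ), i ≤ n ∧
    (S = insert (a.1 + (i : ZMod L), a.2 - 1) (rect L a (n + 1) n) ∨
     S = insert (a.1 + (i : ZMod L), a.2 + (n : ZMod L)) (rect L a (n + 1) n) ∨
     S = insert (a.1 - 1, a.2 + (i : ZMod L)) (rect L a n (n + 1)) ∨
     S = insert (a.1 + (n : ZMod L), a.2 + (i : ZMod L)) (rect L a n (n + 1)))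

/-- `S` is an `n × (n+1)` rectangle plus an extra site attached to a longest side,
next to a corner of the rectangle. -/
def critRlc (L n : ℕ) (S : Finset (Site L)) : Prop :=
  ∃ (a : Site L) (i : ℕ), i ≤ n ∧ (i = 0 ∨ i = n) ∧
    (S = insert (a.1 + (i : ZMod L), a.2 - 1) (rect L a (n + 1) n) ∨
     S = insert (a.1 + (i : ZMod L), a.2 + (n : ZMod L)) (rect L a (n + 1) n) ∨
     S = insert (a.1 - 1, a.2 + (i : ZMod L)) (rect L a n (n + 1)) ∨
     S = insert (a.1 + (n : ZMod L), a.2 + (i : ZMod L)) (rect L a n (n + 1)))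

/-- `S` is an `n × (n+1)` rectangle plus an extra site attached to a longest side,
away from the corners of the rectangle. -/
def critRli (L n : ℕ) (S : Finset (Site L)) : Prop :=
  ∃ (a : Site L) (i : ℕ), 0 < i ∧ i < n ∧
    (S = insert (a.1 + (i : ZMod L), a.2 - 1) (rect L a (n + 1) n) ∨
     S = insert (a.1 + (i : ZMod L), a.2 + (n : ZMod L)) (rect L a (n + 1) n) ∨
     S = insert (a.1 - 1, a.2 + (i : ZMod L)) (rect L a n (n + 1)) ∨
     S = insert (a.1 + (n : ZMod L), a.2 + (i : ZMod L)) (rect L a n (n + 1)))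

/-- `S` is an `n × (n+1)` rectangle plus an extra site attached to a shortest side. -/
def critRs (L n : ℕ) (S : Finset (Site L)) : Prop :=
  ∃ (a : Site L) (j : ℕ), j < n ∧
    (S = insert (a.1 - 1, a.2 + (j : ZMod L)) (rect L a (n + 1) n) ∨
     S = insert (a.1 + ((n + 1 : ℕ) : ZMod L), a.2 + (j : ZMod L)) (rect L a (n + 1) n) ∨
     S = insert (a.1 + (j : ZMod L), a.2 - 1) (rect L a n (n + 1)) ∨
     S = insert (a.1 + (j : ZMod L), a.2 + ((n + 1 : ℕ) : ZMod L)) (rect L a n (n + 1)))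

/-- `S` is an `n × (n+1)` rectangle plus two mutually adjacent extra sites, each attached
to a longest side. -/
def critRl2 (L n : ℕ) (S : Finset (Site L)) : Prop :=
  ∃ (a : Site L) (i : ℕ), i + 1 ≤ n ∧
    (S = rect L a (n + 1) n ∪
        {(a.1 + (i : ZMod L), a.2 - 1), (a.1 + (i : ZMod L) + 1, a.2 - 1)} ∨
     S = rect L a (n + 1) n ∪
        {(a.1 + (i : ZMod L), a.2 + (n : ZMod L)), (a.1 + (i : ZMod L) + 1, a.2 + (n : ZMod L))} ∨
     S = rect L a n (n + 1) ∪
        {(a.1 - 1, a.2 + (i : ZMod L)), (a.1 - 1, a.2 + (i : ZMod L) + 1)} ∨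
     S = rect L a n (n + 1) ∪
        {(a.1 + (n : ZMod L), a.2 + (i : ZMod L)), (a.1 + (n : ZMod L), a.2 + (i : ZMod L) + 1)})

section

variable (L : ℕ) [NeZero L]

/-- The Blume-Capel Hamiltonian with zero chemical potential and magnetic field `h`. -/
def ham (h : ℝ) (σ : Cfg L) : ℝ :=
  (∑ x : Site L,
     (((sval (σ (x + (1, 0))) : ℝ) - (sval (σ x) : ℝ)) ^ 2 +
      ((sval (σ (x + (0, 1))) : ℝ) - (sval (σ x) : ℝ)) ^ 2)) -
  h * ∑ x : Site L, (sval (σ x) : ℝ)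

/-- The set `A(σ)` of sites where the spin differs from `-1`. -/
def Asites (σ : Cfg L) : Finset (Site L) := univ.filter fun x => σ x ≠ 0

/-- `N(σ)`, the number of spins different from `-1`. -/
def Nsz (σ : Cfg L) : ℕ := (Asites L σ).card

/-- The set of sites where the spin differs from `0`. -/
def A0sites (σ : Cfg L) : Finset (Site L) := univ.filter fun x => σ x ≠ 1

/-- `σ^{x,+}` : flip the spin at `x` by `+1 mod 3`. -/
def flipUp (σ : Cfg L) (x : Site L) : Cfg L := Function.update σ x (σ x + 1)

/-- `σ^{x,-}` : flip the spin at `x` by `-1 mod 3`. -/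
def flipDown (σ : Cfg L) (x : Site L) : Cfg L := Function.update σ x (σ x - 1)

/-- Metropolis jump rate. -/
def rate (h β : ℝ) (σ τ : Cfg L) : ℝ := Real.exp (-β * max (ham L h τ - ham L h σ) 0)

/-- Holding rate `λ_β`. -/
def lam (h β : ℝ) (σ : Cfg L) : ℝ :=
  ∑ x : Site L, (rate L h β σ (flipUp L σ x) + rate L h β σ (flipDown L σ x))

/-- One-step average of `u` under the jump probabilities `p_β = R_β/λ_β`. -/
def avg (h β : ℝ) (u : Cfg L → ℝ) (σ : Cfg L) : ℝ :=
  (∑ x : Site L,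
     (rate L h β σ (flipUp L σ x) * u (flipUp L σ x) +
      rate L h β σ (flipDown L σ x) * u (flipDown L σ x))) / lam L h β σ

/-- `u` is harmonic (w.r.t. the jump probabilities `p_β`) on `D`. -/
def harmOn (h β : ℝ) (u : Cfg L → ℝ) (D : Set (Cfg L)) : Prop :=
  ∀ η ∈ D, u η = avg L h β u η

/-- Unnormalised Gibbs weight `e^{-β ℍ(σ)}`. -/
def gw (h β : ℝ) (σ : Cfg L) : ℝ := Real.exp (-β * ham L h σ)

/-- Two configurations differ at exactly one site. -/
def oneDiff (σ τ : Cfg L) : Prop := (univ.filter fun x => σ x ≠ τ x).card = 1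

/-- Dirichlet form of the chain reflected in `V`. -/
def dirV (h β : ℝ) (V : Set (Cfg L)) (f : Cfg L → ℝ) : ℝ :=
  (1 / 2) * ∑ σ : Cfg L, ∑ τ : Cfg L,
    if σ ∈ V ∧ τ ∈ V ∧ oneDiff L σ τ
    then min (gw L h β σ) (gw L h β τ) * (f τ - f σ) ^ 2 else 0

/-- Capacity (via the Dirichlet principle) for the chain reflected in `V`. -/
def capV (h β : ℝ) (V A B : Set (Cfg L)) : ℝ :=
  sInf { e : ℝ | ∃ f : Cfg L → ℝ, (∀ σ, 0 ≤ f σ ∧ f σ ≤ 1) ∧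
        (∀ σ ∈ A, f σ = 1) ∧ (∀ σ ∈ B, f σ = 0) ∧ e = dirV L h β V f }

/-- Dirichlet form of the full chain. -/
def dirForm (h β : ℝ) (f : Cfg L → ℝ) : ℝ :=
  (1 / 2) * ∑ σ : Cfg L, ∑ x : Site L,
    (min (gw L h β σ) (gw L h β (flipUp L σ x)) * (f (flipUp L σ x) - f σ) ^ 2 +
     min (gw L h β σ) (gw L h β (flipDown L σ x)) * (f (flipDown L σ x) - f σ) ^ 2)

/-- Capacity via the Dirichlet variational principle. -/
def capa (h β : ℝ) (A B : Set (Cfg L)) : ℝ :=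
  sInf { e : ℝ | ∃ f : Cfg L → ℝ, (∀ σ, 0 ≤ f σ ∧ f σ ≤ 1) ∧
        (∀ σ ∈ A, f σ = 1) ∧ (∀ σ ∈ B, f σ = 0) ∧ e = dirForm L h β f }

/-- Holding rate of the chain reflected in `V`. -/
def lamV (h β : ℝ) (V : Set (Cfg L)) (σ : Cfg L) : ℝ :=
  ∑ x : Site L,
    ((if flipUp L σ x ∈ V then rate L h β σ (flipUp L σ x) else 0) +
     (if flipDown L σ x ∈ V then rate L h β σ (flipDown L σ x) else 0))

/-- One-step average for the chain reflected in `V`. -/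
def avgV (h β : ℝ) (V : Set (Cfg L)) (u : Cfg L → ℝ) (σ : Cfg L) : ℝ :=
  (∑ x : Site L,
    ((if flipUp L σ x ∈ V then rate L h β σ (flipUp L σ x) * u (flipUp L σ x) else 0) +
     (if flipDown L σ x ∈ V then rate L h β σ (flipDown L σ x) * u (flipDown L σ x) else 0))) /
  lamV L h β V σ

/-- `R` : `0`-spins forming an `n × (n+1)` rectangle in a sea of `-1`-spins. -/
def setR (n : ℕ) : Set (Cfg L) :=
  {σ | (∀ x, σ x ≠ 2) ∧ isCritRect L n (Asites L σ)}

/-- `B` : configurations with exactly `n(n+1)` spins different from `-1`. -/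
def setB (n : ℕ) : Set (Cfg L) := {σ | Nsz L σ = n * (n + 1)}

/-- `R⁺` : an `n × (n+1)` rectangle of `0`-spins plus one extra spin (`0` or `+1`)
outside the rectangle, in a sea of `-1`-spins. -/
def setRplus (n : ℕ) : Set (Cfg L) :=
  {σ | ∃ (S : Finset (Site L)) (z : Site L), isCritRect L n S ∧ z ∉ S ∧
       Asites L σ = insert z S ∧ ∀ x ∈ S, σ x = 1}

/-- `Rᵃ` : an `n × (n+1)` rectangle of `0`-spins plus one extra `0`-spin attached to the
rectangle, in a sea of `-1`-spins. -/
def setRa (n : ℕ) : Set (Cfg L) :=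
  {σ | ∃ (S : Finset (Site L)) (z : Site L), isCritRect L n S ∧ z ∉ S ∧
       Asites L σ = insert z S ∧ (∀ x ∈ S, σ x = 1) ∧ σ z = 1 ∧ ∃ y ∈ S, nbr L z y}

/-- The valley `V₋₁` of the configuration `-1`. -/
def valleyM (n : ℕ) : Set (Cfg L) := {σ | Nsz L σ ≤ n * (n + 1)} ∪ setRplus L n

/-- `B⁺`, the boundary of the valley of `-1`. -/
def setBplus (n : ℕ) : Set (Cfg L) := (setB L n \ setR L n) ∪ setRplus L n

/-- `Rˡ` : critical droplet with the protuberance attached to a longest side. -/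
def setRl (n : ℕ) : Set (Cfg L) :=
  {σ | (∀ x, σ x ≠ 2) ∧ critRl L n (Asites L σ) ∧ Nsz L σ = n * (n + 1) + 1}

/-- `Rˡᶜ` : protuberance attached to a longest side next to a corner. -/
def setRlc (n : ℕ) : Set (Cfg L) :=
  {σ | (∀ x, σ x ≠ 2) ∧ critRlc L n (Asites L σ) ∧ Nsz L σ = n * (n + 1) + 1}

/-- `Rˡⁱ` : protuberance attached to a longest side away from the corners. -/
def setRli (n : ℕ) : Set (Cfg L) :=
  {σ | (∀ x, σ x ≠ 2) ∧ critRli L n (Asites L σ) ∧ Nsz L σ = n * (n + 1) + 1}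

/-- `Rˢ` : protuberance attached to a shortest side. -/
def setRs (n : ℕ) : Set (Cfg L) :=
  {σ | (∀ x, σ x ≠ 2) ∧ critRs L n (Asites L σ) ∧ Nsz L σ = n * (n + 1) + 1}

/-- `Rˡ₀` : critical droplet of `+1`-spins in a sea of `0`-spins, protuberance on a
longest side. -/
def setRl0 (n : ℕ) : Set (Cfg L) :=
  {σ | (∀ x, σ x ≠ 0) ∧ critRl L n (A0sites L σ) ∧ (A0sites L σ).card = n * (n + 1) + 1}

/-- The energy `Γ_c` of a critical droplet. -/
def GammaC (h : ℝ) : ℝ :=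
  4 * ((n0 h : ℝ) + 1) - h * (((n0 h * (n0 h + 1) + 1 : ℕ) : ℝ) - (L : ℝ) ^ 2)

/-- `δ₁(β) = e^{-hβ} + |Λ|^{1/2} e^{-(2-h)β} + |Λ| e^{-(4-h)β}`. -/
def delta1 (h β : ℝ) : ℝ :=
  Real.exp (-h * β) + (L : ℝ) * Real.exp (-(2 - h) * β) +
    (L : ℝ) ^ 2 * Real.exp (-(4 - h) * β)

/-- `δ₅(β) = e^{-[(n₀+1)h-2]β} + e^{-hβ} + |Λ|^{3/2} e^{-(2-h)β}`. -/
def delta5 (h β : ℝ) : ℝ :=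
  Real.exp (-(((n0 h : ℝ) + 1) * h - 2) * β) + Real.exp (-h * β) +
    (L : ℝ) ^ 3 * Real.exp (-(2 - h) * β)

/-- `δ(β) = |Λ|^{1/2} e^{-[(n₀+1)h-2]β} + |Λ|^{1/2} e^{-hβ} + |Λ|² e^{-(2-h)β}`. -/
def deltaP (h β : ℝ) : ℝ :=
  (L : ℝ) * Real.exp (-(((n0 h : ℝ) + 1) * h - 2) * β) + (L : ℝ) * Real.exp (-h * β) +
    (L : ℝ) ^ 4 * Real.exp (-(2 - h) * β)

end

end BC

namespace P74


variable {L : ℕ} [NeZero L]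
open BC

def colSum (S : Finset (Site L)) (c : ZMod L) : ℕ :=
  ∑ r : ZMod L, ((if (c,r) ∈ S ∧ (c,r+1) ∉ S then 1 else 0) +
    (if (c,r+1) ∈ S ∧ (c,r) ∉ S then 1 else 0))

def rowSum (S : Finset (Site L)) (r : ZMod L) : ℕ :=
  ∑ c : ZMod L, ((if (c,r) ∈ S ∧ (c+1,r) ∉ S then 1 else 0) +
    (if (c+1,r) ∈ S ∧ (c,r) ∉ S then 1 else 0))

def hPart (S : Finset (Site L)) : ℕ :=
  ∑ x : Site L, ((if x ∈ S ∧ x + (1,0) ∉ S then 1 else 0) +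
    (if x + (1,0) ∈ S ∧ x ∉ S then 1 else 0))

def vPart (S : Finset (Site L)) : ℕ :=
  ∑ x : Site L, ((if x ∈ S ∧ x + (0,1) ∉ S then 1 else 0) +
    (if x + (0,1) ∈ S ∧ x ∉ S then 1 else 0))

def perOri (S : Finset (Site L)) : ℕ := hPart S + vPart S

lemma vPart_eq (S : Finset (Site L)) : vPart S = ∑ c : ZMod L, colSum S c := by
  rw [vPart, Fintype.sum_prod_type]
  refine Finset.sum_congr rfl fun c _ => ?_
  refine Finset.sum_congr rfl fun r _ => ?_
  simp [colSum, Prod.mk_add_mk]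

lemma hPart_eq (S : Finset (Site L)) : hPart S = ∑ r : ZMod L, rowSum S r := by
  rw [hPart, Fintype.sum_prod_type, Finset.sum_comm]
  refine Finset.sum_congr rfl fun r _ => ?_
  refine Finset.sum_congr rfl fun c _ => ?_
  simp [rowSum, Prod.mk_add_mk]

lemma pair_le_sum {f : ZMod L → ℕ} {a b : ZMod L} (hab : a ≠ b) :
    f a + f b ≤ ∑ r : ZMod L, f r := by
  calc f a + f b = ∑ r ∈ ({a, b} : Finset (ZMod L)), f r := (Finset.sum_pair hab).symm
  _ ≤ ∑ r : ZMod L, f r := Finset.sum_le_sum_of_subset (Finset.subset_univ _)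

lemma zmod_closure (T : Finset (ZMod L)) (a : ZMod L) (ha : a ∈ T)
    (hcl : ∀ x ∈ T, x + 1 ∈ T) : ∀ t, t ∈ T := by
  have key : ∀ n : ℕ, a + (n : ZMod L) ∈ T := by
    intro n
    induction n with
    | zero => simpa using ha
    | succ k ih =>
        have : a + ((k : ZMod L) + 1) ∈ T := by
          have := hcl _ ih
          rwa [add_assoc] at this
        simpa [Nat.cast_succ] using this
  intro t
  have h1 : ((t - a).val : ZMod L) = t - a := ZMod.natCast_rightInverse (t - a)
  have := key (t - a).val
  rwa [h1, add_sub_cancel] at this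

lemma cyc_exit (T : Finset (ZMod L)) (hne : T.Nonempty) (hnu : T ≠ Finset.univ) :
    ∃ a, a ∈ T ∧ a + 1 ∉ T := by
  by_contra hc
  push_neg at hc
  obtain ⟨a, ha⟩ := hne
  exact hnu (Finset.eq_univ_iff_forall.2 (zmod_closure T a ha hc))

lemma cyc_enter (T : Finset (ZMod L)) (hne : T.Nonempty) (hnu : T ≠ Finset.univ) :
    ∃ a, a ∉ T ∧ a + 1 ∈ T := by
  have h1 : Tᶜ.Nonempty := by
    rw [← Finset.card_pos, Finset.card_compl, tsub_pos_iff_lt]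
    exact lt_of_le_of_ne (Finset.card_le_univ T) (fun hh => hnu (Finset.eq_univ_of_card _ hh))
  have h2 : Tᶜ ≠ Finset.univ := by
    intro hh
    obtain ⟨a, ha⟩ := hne
    have : a ∈ Tᶜ := hh ▸ Finset.mem_univ a
    exact (Finset.mem_compl.1 this) ha
  obtain ⟨a, ha1, ha2⟩ := cyc_exit Tᶜ h1 h2
  exact ⟨a, Finset.mem_compl.1 ha1, by simpa using ha2⟩

lemma colSum_ge_two (S : Finset (Site L)) (c : ZMod L)
    (hocc : ∃ r, (c,r) ∈ S) (hnf : ∃ r, (c,r) ∉ S) : 2 ≤ colSum S c := by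
  classical
  set T : Finset (ZMod L) := Finset.univ.filter (fun r => (c,r) ∈ S) with hT
  have hmem : ∀ r, r ∈ T ↔ (c,r) ∈ S := by intro r; simp [hT]
  have hne : T.Nonempty := by obtain ⟨r, hr⟩ := hocc; exact ⟨r, (hmem r).2 hr⟩
  have hnu : T ≠ Finset.univ := by
    intro hh; obtain ⟨r, hr⟩ := hnf
    exact hr ((hmem r).1 (hh ▸ Finset.mem_univ r))
  obtain ⟨a, ha1, ha2⟩ := cyc_exit T hne hnu
  obtain ⟨b, hb1, hb2⟩ := cyc_enter T hne hnu
  have hab : a ≠ b := fun hh => hb1 (hh ▸ ha1)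
  have key := pair_le_sum (L := L)
    (f := fun r => ((if (c,r) ∈ S ∧ (c,r+1) ∉ S then 1 else 0) +
      (if (c,r+1) ∈ S ∧ (c,r) ∉ S then 1 else 0))) hab
  refine le_trans ?_ key
  have t1 : (if (c,a) ∈ S ∧ (c,a+1) ∉ S then 1 else 0) = 1 :=
    if_pos ⟨(hmem a).1 ha1, fun hh => ha2 ((hmem _).2 hh)⟩
  have t2 : (if (c,b+1) ∈ S ∧ (c,b) ∉ S then 1 else 0) = 1 :=
    if_pos ⟨(hmem (b+1)).1 hb2, fun hh => hb1 ((hmem b).2 hh)⟩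
  have h1 : 1 ≤ (if (c,a) ∈ S ∧ (c,a+1) ∉ S then 1 else 0) +
      if (c,a+1) ∈ S ∧ (c,a) ∉ S then 1 else 0 := by
    rw [t1]; exact Nat.le_add_right 1 _
  have h2 : 1 ≤ (if (c,b) ∈ S ∧ (c,b+1) ∉ S then 1 else 0) +
      if (c,b+1) ∈ S ∧ (c,b) ∉ S then 1 else 0 := by
    rw [t2]; exact Nat.le_add_left 1 _
  have : (2:ℕ) = 1 + 1 := rfl
  rw [this]; exact add_le_add h1 h2

lemma rowSum_ge_two (S : Finset (Site L)) (r : ZMod L)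
    (hocc : ∃ c, (c,r) ∈ S) (hnf : ∃ c, (c,r) ∉ S) : 2 ≤ rowSum S r := by
  classical
  set T : Finset (ZMod L) := Finset.univ.filter (fun c => (c,r) ∈ S) with hT
  have hmem : ∀ c, c ∈ T ↔ (c,r) ∈ S := by intro c; simp [hT]
  have hne : T.Nonempty := by obtain ⟨c, hc⟩ := hocc; exact ⟨c, (hmem c).2 hc⟩
  have hnu : T ≠ Finset.univ := by
    intro hh; obtain ⟨c, hc⟩ := hnf
    exact hc ((hmem c).1 (hh ▸ Finset.mem_univ c))
  obtain ⟨a, ha1, ha2⟩ := cyc_exit T hne hnu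
  obtain ⟨b, hb1, hb2⟩ := cyc_enter T hne hnu
  have hab : a ≠ b := fun hh => hb1 (hh ▸ ha1)
  have key := pair_le_sum (L := L)
    (f := fun c => ((if (c,r) ∈ S ∧ (c+1,r) ∉ S then 1 else 0) +
      (if (c+1,r) ∈ S ∧ (c,r) ∉ S then 1 else 0))) hab
  refine le_trans ?_ key
  have t1 : (if (a,r) ∈ S ∧ (a+1,r) ∉ S then 1 else 0) = 1 :=
    if_pos ⟨(hmem a).1 ha1, fun hh => ha2 ((hmem _).2 hh)⟩
  have t2 : (if (b+1,r) ∈ S ∧ (b,r) ∉ S then 1 else 0) = 1 :=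
    if_pos ⟨(hmem (b+1)).1 hb2, fun hh => hb1 ((hmem b).2 hh)⟩
  have h1 : 1 ≤ (if (a,r) ∈ S ∧ (a+1,r) ∉ S then 1 else 0) +
      if (a+1,r) ∈ S ∧ (a,r) ∉ S then 1 else 0 := by
    rw [t1]; exact Nat.le_add_right 1 _
  have h2 : 1 ≤ (if (b,r) ∈ S ∧ (b+1,r) ∉ S then 1 else 0) +
      if (b+1,r) ∈ S ∧ (b,r) ∉ S then 1 else 0 := by
    rw [t2]; exact Nat.le_add_left 1 _
  have : (2:ℕ) = 1 + 1 := rfl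
  rw [this]; exact add_le_add h1 h2

lemma vPart_ge_cols (S : Finset (Site L)) (hnofull : ∀ c, ∃ r, (c,r) ∉ S) :
    2 * (S.image Prod.fst).card ≤ vPart S := by
  rw [vPart_eq]
  calc 2 * (S.image Prod.fst).card = ∑ _c ∈ S.image Prod.fst, 2 := by
        rw [Finset.sum_const, smul_eq_mul, mul_comm]
  _ ≤ ∑ c ∈ S.image Prod.fst, colSum S c := by
        refine Finset.sum_le_sum fun c hc => ?_
        obtain ⟨x, hx, hx1⟩ := Finset.mem_image.1 hc
        refine colSum_ge_two S c ⟨x.2, ?_⟩ (hnofull c)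
        rwa [← hx1, Prod.mk.eta]
  _ ≤ ∑ c : ZMod L, colSum S c := Finset.sum_le_sum_of_subset (Finset.subset_univ _)

lemma hPart_ge_rows (S : Finset (Site L)) (hnofull : ∀ r, ∃ c, (c,r) ∉ S) :
    2 * (S.image Prod.snd).card ≤ hPart S := by
  rw [hPart_eq]
  calc 2 * (S.image Prod.snd).card = ∑ _r ∈ S.image Prod.snd, 2 := by
        rw [Finset.sum_const, smul_eq_mul, mul_comm]
  _ ≤ ∑ r ∈ S.image Prod.snd, rowSum S r := by
        refine Finset.sum_le_sum fun r hr => ?_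
        obtain ⟨x, hx, hx1⟩ := Finset.mem_image.1 hr
        refine rowSum_ge_two S r ⟨x.1, ?_⟩ (hnofull r)
        rwa [← hx1, Prod.mk.eta]
  _ ≤ ∑ r : ZMod L, rowSum S r := Finset.sum_le_sum_of_subset (Finset.subset_univ _)

lemma hPart_ge_full (S : Finset (Site L)) (c₀ : ZMod L) (hfull : ∀ r, (c₀, r) ∈ S) :
    2 * ((Finset.univ.filter (fun r : ZMod L => ∀ c, (c,r) ∈ S))ᶜ).card ≤ hPart S := by
  rw [hPart_eq]
  set F := Finset.univ.filter (fun r : ZMod L => ∀ c, (c,r) ∈ S) with hF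
  calc 2 * Fᶜ.card = ∑ _r ∈ Fᶜ, 2 := by rw [Finset.sum_const, smul_eq_mul, mul_comm]
  _ ≤ ∑ r ∈ Fᶜ, rowSum S r := by
        refine Finset.sum_le_sum fun r hr => ?_
        have : ¬ (∀ c, (c,r) ∈ S) := by
          intro hall
          exact (Finset.mem_compl.1 hr) (by simp [hF, hall])
        push_neg at this
        exact rowSum_ge_two S r ⟨c₀, hfull r⟩ this
  _ ≤ ∑ r : ZMod L, rowSum S r := Finset.sum_le_sum_of_subset (Finset.subset_univ _)

lemma vPart_ge_full (S : Finset (Site L)) (r₀ : ZMod L) (hfull : ∀ c, (c, r₀) ∈ S) :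
    2 * ((Finset.univ.filter (fun c : ZMod L => ∀ r, (c,r) ∈ S))ᶜ).card ≤ vPart S := by
  rw [vPart_eq]
  set F := Finset.univ.filter (fun c : ZMod L => ∀ r, (c,r) ∈ S) with hF
  calc 2 * Fᶜ.card = ∑ _c ∈ Fᶜ, 2 := by rw [Finset.sum_const, smul_eq_mul, mul_comm]
  _ ≤ ∑ c ∈ Fᶜ, colSum S c := by
        refine Finset.sum_le_sum fun c hc => ?_
        have : ¬ (∀ r, (c,r) ∈ S) := by
          intro hall
          exact (Finset.mem_compl.1 hc) (by simp [hF, hall])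
        push_neg at this
        exact colSum_ge_two S c ⟨r₀, hfull c⟩ this
  _ ≤ ∑ c : ZMod L, colSum S c := Finset.sum_le_sum_of_subset (Finset.subset_univ _)

lemma fullRows_mul (S : Finset (Site L)) :
    L * (Finset.univ.filter (fun r : ZMod L => ∀ c, (c,r) ∈ S)).card ≤ S.card := by
  set F := Finset.univ.filter (fun r : ZMod L => ∀ c, (c,r) ∈ S) with hF
  have hsub : (Finset.univ ×ˢ F : Finset (Site L)) ⊆ S := by
    intro x hx
    obtain ⟨-, h2⟩ := Finset.mem_product.1 hx
    have : ∀ c, (c, x.2) ∈ S := (Finset.mem_filter.1 h2).2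
    have := this x.1
    rwa [Prod.mk.eta] at this
  have := Finset.card_le_card hsub
  rwa [Finset.card_product, Finset.card_univ, ZMod.card] at this

lemma fullCols_mul (S : Finset (Site L)) :
    L * (Finset.univ.filter (fun c : ZMod L => ∀ r, (c,r) ∈ S)).card ≤ S.card := by
  set F := Finset.univ.filter (fun c : ZMod L => ∀ r, (c,r) ∈ S) with hF
  have hsub : (F ×ˢ Finset.univ : Finset (Site L)) ⊆ S := by
    intro x hx
    obtain ⟨h2, -⟩ := Finset.mem_product.1 hx
    have : ∀ r, (x.1, r) ∈ S := (Finset.mem_filter.1 h2).2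
    have := this x.2
    rwa [Prod.mk.eta] at this
  have := Finset.card_le_card hsub
  rw [Finset.card_product, Finset.card_univ, ZMod.card, mul_comm] at this
  exact this

lemma arithA (n R C m : ℕ) (hn : 1 ≤ n) (hR : 1 ≤ R) (hC : 1 ≤ C)
    (hm : m ≤ R * C) (hK : m ≤ n*(n+1)+1) : n + m ≤ n * (R + C) := by
  rcases le_or_gt R n with h | h
  · have h1 : m ≤ n * C := le_trans hm (Nat.mul_le_mul_right C h)
    have h2 : n ≤ n * R := Nat.le_mul_of_pos_right n hR
    calc n + m ≤ n*R + n*C := add_le_add h2 h1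
    _ = n * (R + C) := (Nat.mul_add n R C).symm
  · rcases le_or_gt C n with h' | h'
    · have h1 : m ≤ n * R := by
        refine le_trans hm ?_
        rw [mul_comm]
        exact Nat.mul_le_mul_right R h'
      have h2 : n ≤ n * C := Nat.le_mul_of_pos_right n hC
      calc n + m ≤ n*C + n*R := add_le_add h2 h1
      _ = n * (R + C) := by rw [← Nat.mul_add]; ring_nf
    · nlinarith

lemma arithB (n Ln f m : ℕ) (hn : 1 ≤ n) (hL : 2*n+4 ≤ Ln)
    (hm : m ≤ n*(n+1)+1) (hf : Ln * f ≤ m) : n + m ≤ n * (Ln - f) := by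
  have hfn : f ≤ n := by
    by_contra hcon
    push_neg at hcon
    have h1 : (2*n+4)*(n+1) ≤ Ln * f := Nat.mul_le_mul hL hcon
    nlinarith
  have h2 : n + 4 ≤ Ln - f := by omega
  calc n + m ≤ n + (n*(n+1)+1) := by omega
  _ ≤ n * (n+4) := by nlinarith
  _ ≤ n * (Ln - f) := Nat.mul_le_mul_left n h2

lemma iso (n : ℕ) (hn : 1 ≤ n) (hL : 2*n+4 ≤ L) (S : Finset (Site L))
    (hne : S.Nonempty) (hcard : S.card ≤ n*(n+1)+1) :
    2 * (n + S.card) ≤ n * perOri S := by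
  classical
  have hperh : hPart S ≤ perOri S := Nat.le_add_right _ _
  have hperv : vPart S ≤ perOri S := Nat.le_add_left _ _
  by_cases hfc : ∃ c₀ : ZMod L, ∀ r, (c₀, r) ∈ S
  · obtain ⟨c₀, hc₀⟩ := hfc
    set F := Finset.univ.filter (fun r : ZMod L => ∀ c, (c,r) ∈ S) with hF
    have h1 : 2 * Fᶜ.card ≤ hPart S := hPart_ge_full S c₀ hc₀
    have h2 : L * F.card ≤ S.card := fullRows_mul S
    have hcc : Fᶜ.card = L - F.card := by
      rw [Finset.card_compl]
      congr 1
      simp [Finset.card_univ, ZMod.card]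
    have key : n + S.card ≤ n * (L - F.card) :=
      arithB n L F.card S.card hn hL hcard (le_trans h2 le_rfl)
    calc 2*(n + S.card) ≤ 2*(n*(L - F.card)) := by omega
    _ = n * (2 * (L - F.card)) := by ring
    _ ≤ n * hPart S := Nat.mul_le_mul_left n (by rw [← hcc]; exact h1)
    _ ≤ n * perOri S := Nat.mul_le_mul_left n hperh
  · by_cases hfr : ∃ r₀ : ZMod L, ∀ c, (c, r₀) ∈ S
    · obtain ⟨r₀, hr₀⟩ := hfr
      set F := Finset.univ.filter (fun c : ZMod L => ∀ r, (c,r) ∈ S) with hF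
      have h1 : 2 * Fᶜ.card ≤ vPart S := vPart_ge_full S r₀ hr₀
      have h2 : L * F.card ≤ S.card := fullCols_mul S
      have hcc : Fᶜ.card = L - F.card := by
        rw [Finset.card_compl]
        congr 1
        simp [Finset.card_univ, ZMod.card]
      have key : n + S.card ≤ n * (L - F.card) :=
        arithB n L F.card S.card hn hL hcard h2
      calc 2*(n + S.card) ≤ 2*(n*(L - F.card)) := by omega
      _ = n * (2 * (L - F.card)) := by ring
      _ ≤ n * vPart S := Nat.mul_le_mul_left n (by rw [← hcc]; exact h1)
      _ ≤ n * perOri S := Nat.mul_le_mul_left n hperv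
    · push_neg at hfc hfr
      have h1 : 2 * (S.image Prod.fst).card ≤ vPart S := vPart_ge_cols S hfc
      have h2 : 2 * (S.image Prod.snd).card ≤ hPart S := hPart_ge_rows S hfr
      have hC : 1 ≤ (S.image Prod.fst).card := Finset.card_pos.2 (hne.image _)
      have hR : 1 ≤ (S.image Prod.snd).card := Finset.card_pos.2 (hne.image _)
      have hm : S.card ≤ (S.image Prod.fst).card * (S.image Prod.snd).card := by
        have hsub : S ⊆ (S.image Prod.fst) ×ˢ (S.image Prod.snd) := by
          intro x hx
          exact Finset.mem_product.2 ⟨Finset.mem_image_of_mem _ hx,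
            Finset.mem_image_of_mem _ hx⟩
        have := Finset.card_le_card hsub
        rwa [Finset.card_product] at this
      have key : n + S.card ≤
          n * ((S.image Prod.fst).card + (S.image Prod.snd).card) := by
        have := arithA n (S.image Prod.fst).card (S.image Prod.snd).card S.card
          hn hC hR hm hcard
        calc n + S.card ≤ n * ((S.image Prod.fst).card + (S.image Prod.snd).card) := this
        _ = _ := rfl
      calc 2*(n + S.card)
          ≤ 2*(n * ((S.image Prod.fst).card + (S.image Prod.snd).card)) := by omega
      _ = n * (2*(S.image Prod.fst).card + 2*(S.image Prod.snd).card) := by ring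
      _ ≤ n * (vPart S + hPart S) := Nat.mul_le_mul_left n (add_le_add h1 h2)
      _ = n * perOri S := by rw [perOri]; ring_nf
  
section Peel

variable (L : ℕ) [NeZero L]

lemma mem_asites (σ : Cfg L) (x : Site L) : x ∈ Asites L σ ↔ σ x ≠ 0 := by
  simp [Asites]

def peelRoot (σ : Cfg L) : Site L :=
  if h : (Asites L σ).Nonempty then h.choose else 0

lemma peelRoot_mem (σ : Cfg L) (h : (Asites L σ).Nonempty) :
    peelRoot L σ ∈ Asites L σ := by
  rw [peelRoot, dif_pos h]; exact h.choose_spec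

def grow (σ : Cfg L) (X : Finset (Site L)) : Finset (Site L) :=
  X ∪ (Asites L σ).filter (fun y => ∃ x ∈ X, y ∈ nbrFinset L x)

def comp (σ : Cfg L) (fuel : ℕ) : Finset (Site L) :=
  (grow L σ)^[fuel] {peelRoot L σ}

def peeled (σ : Cfg L) (fuel : ℕ) : Cfg L :=
  fun x => if x ∈ comp L σ fuel then 0 else σ x

lemma subset_grow (σ : Cfg L) (X : Finset (Site L)) : X ⊆ grow L σ X :=
  Finset.subset_union_left

lemma grow_subset (σ : Cfg L) (X : Finset (Site L)) (hX : X ⊆ Asites L σ) :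
    grow L σ X ⊆ Asites L σ :=
  Finset.union_subset hX (Finset.filter_subset _ _)

lemma comp_subset (σ : Cfg L) (h : (Asites L σ).Nonempty) (fuel : ℕ) :
    comp L σ fuel ⊆ Asites L σ := by
  induction fuel with
  | zero =>
      rw [comp]
      simpa using Finset.singleton_subset_iff.2 (peelRoot_mem L σ h)
  | succ k ih =>
      rw [comp, Function.iterate_succ_apply']
      exact grow_subset L σ _ ih

lemma subset_comp_succ (σ : Cfg L) (fuel : ℕ) :
    comp L σ fuel ⊆ comp L σ (fuel + 1) := by
  rw [comp, comp, Function.iterate_succ_apply']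
  exact subset_grow L σ _

lemma root_mem_comp (σ : Cfg L) (fuel : ℕ) : peelRoot L σ ∈ comp L σ fuel := by
  induction fuel with
  | zero => simp [comp]
  | succ k ih => exact subset_comp_succ L σ k ih

lemma comp_stab (σ : Cfg L) (h : (Asites L σ).Nonempty) (fuel : ℕ)
    (hcard : (Asites L σ).card ≤ fuel) :
    grow L σ (comp L σ fuel) = comp L σ fuel := by
  have aux : ∀ k : ℕ, grow L σ (comp L σ k) = comp L σ k ∨ k + 1 ≤ (comp L σ k).card := by
    intro k
    induction k with
    | zero => right; simp [comp]
    | succ k ih =>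
        have hsucc : comp L σ (k+1) = grow L σ (comp L σ k) := by
          rw [comp, Function.iterate_succ_apply']; rfl
        rcases ih with heq | hc
        · left; rw [hsucc, heq, ← hsucc, hsucc, heq]
        · by_cases h2 : grow L σ (comp L σ k) = comp L σ k
          · left; rw [hsucc, h2, ← hsucc, hsucc, h2]
          · right
            have hss : comp L σ k ⊂ grow L σ (comp L σ k) :=
              (Finset.ssubset_iff_of_subset (subset_grow L σ _)).2 (by
                by_contra hno
                push_neg at hno
                exact h2 (Finset.Subset.antisymm (fun x hx => hno x hx)
                  (subset_grow L σ _)))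
            have := Finset.card_lt_card hss
            rw [hsucc]
            omega
  rcases aux fuel with heq | hc
  · exact heq
  · have := Finset.card_le_card (comp_subset L σ h fuel)
    omega

lemma comp_closed (σ : Cfg L) (h : (Asites L σ).Nonempty) (fuel : ℕ)
    (hcard : (Asites L σ).card ≤ fuel) (x : Site L) (hx : x ∈ comp L σ fuel)
    (y : Site L) (hnb : y ∈ nbrFinset L x) (hy : σ y ≠ 0) : y ∈ comp L σ fuel := by
  have : y ∈ grow L σ (comp L σ fuel) := by
    rw [grow]
    exact Finset.mem_union_right _ (Finset.mem_filter.2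
      ⟨(mem_asites L σ y).2 hy, ⟨x, hx, hnb⟩⟩)
  rwa [comp_stab L σ h fuel hcard] at this

lemma comp_offsets (σ : Cfg L) (fuel : ℕ) (x : Site L) (hx : x ∈ comp L σ fuel) :
    ∃ i j : ℤ, i.natAbs ≤ fuel ∧ j.natAbs ≤ fuel ∧
      x = peelRoot L σ + (((i : ℤ) : ZMod L), ((j : ℤ) : ZMod L)) := by
  induction fuel generalizing x with
  | zero =>
      rw [comp] at hx
      simp only [Function.iterate_zero, id_eq, Finset.mem_singleton] at hx
      exact ⟨0, 0, by simp, by simp, by simp [hx]⟩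
  | succ k ih =>
      rw [comp, Function.iterate_succ_apply'] at hx
      rcases Finset.mem_union.1 hx with hx1 | hx2
      · obtain ⟨i, j, hi, hj, hval⟩ := ih x hx1
        exact ⟨i, j, by omega, by omega, hval⟩
      · obtain ⟨-, z, hz, hnb⟩ := Finset.mem_filter.1 hx2
        obtain ⟨i, j, hi, hj, hval⟩ := ih z hz
        simp only [nbrFinset, Finset.mem_insert, Finset.mem_singleton] at hnb
        rcases hnb with hh | hh | hh | hh
        · refine ⟨i + 1, j, by omega, by omega, ?_⟩
          rw [hh, hval, add_assoc]
          congr 1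
          simp only [Prod.mk_add_mk, Prod.mk.injEq]
          constructor <;> push_cast <;> ring
        · refine ⟨i - 1, j, by omega, by omega, ?_⟩
          rw [hh, hval, add_sub_assoc]
          congr 1
          simp only [Prod.mk_sub_mk, Prod.mk.injEq]
          constructor <;> push_cast <;> ring
        · refine ⟨i, j + 1, by omega, by omega, ?_⟩
          rw [hh, hval, add_assoc]
          congr 1
          simp only [Prod.mk_add_mk, Prod.mk.injEq]
          constructor <;> push_cast <;> ring
        · refine ⟨i, j - 1, by omega, by omega, ?_⟩
          rw [hh, hval, add_sub_assoc]
          congr 1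
          simp only [Prod.mk_sub_mk, Prod.mk.injEq]
          constructor <;> push_cast <;> ring

lemma asites_peeled (σ : Cfg L) (fuel : ℕ) :
    Asites L (peeled L σ fuel) = Asites L σ \ comp L σ fuel := by
  ext x
  by_cases hx : x ∈ comp L σ fuel <;>
    simp [Asites, peeled, Finset.mem_sdiff, hx]

lemma nsz_peeled_lt (σ : Cfg L) (h : (Asites L σ).Nonempty) (fuel : ℕ) :
    Nsz L (peeled L σ fuel) < Nsz L σ := by
  rw [Nsz, Nsz, asites_peeled]
  refine Finset.card_lt_card ?_
  refine (Finset.ssubset_iff_of_subset Finset.sdiff_subset).2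
    ⟨peelRoot L σ, peelRoot_mem L σ h, ?_⟩
  simp [Finset.mem_sdiff, root_mem_comp L σ fuel]

end Peel

section Energy

variable (L : ℕ) [NeZero L]

lemma sval0 : sval 0 = -1 := by decide
lemma sval1 : sval 1 = 0 := by decide
lemma sval2 : sval 2 = 1 := by decide

lemma fin3_cases (a : Fin 3) : a = 0 ∨ a = 1 ∨ a = 2 := by
  fin_cases a <;> simp

def indTerm (S : Finset (Site L)) (x y : Site L) : ℝ :=
  (if x ∈ S ∧ y ∉ S then 1 else 0) + (if y ∈ S ∧ x ∉ S then 1 else 0)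

lemma nbr_symmFinset (x y : Site L) (h : y ∈ nbrFinset L x) : x ∈ nbrFinset L y := by
  simp only [nbrFinset, Finset.mem_insert, Finset.mem_singleton] at h ⊢
  rcases h with h|h|h|h <;> subst h
  · right; left; rw [add_sub_cancel_right]
  · left; rw [sub_add_cancel]
  · right; right; right; rw [add_sub_cancel_right]
  · right; right; left; rw [sub_add_cancel]

lemma ptcore (C Pp : Finset (Site L)) (σ : Cfg L) (x y : Site L)
    (hPx : x ∈ Pp ↔ x ∈ C ∧ σ x = 2) (hPy : y ∈ Pp ↔ y ∈ C ∧ σ y = 2)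
    (hCx : x ∈ C → σ x ≠ 0) (hCy : y ∈ C → σ y ≠ 0)
    (hclxy : x ∈ C → y ∉ C → σ y = 0) (hclyx : y ∈ C → x ∉ C → σ x = 0) :
    indTerm L C x y + indTerm L Pp x y ≤
      ((sval (σ y) : ℝ) - (sval (σ x) : ℝ))^2 -
      ((sval (if y ∈ C then 0 else σ y) : ℝ) - (sval (if x ∈ C then 0 else σ x) : ℝ))^2 := by
  rw [indTerm, indTerm]
  by_cases hx : x ∈ C <;> by_cases hy : y ∈ C
  · have hax := hCx hx
    have hay := hCy hy
    rcases fin3_cases (σ x) with ha|ha|ha <;> rcases fin3_cases (σ y) with hb|hb|hb <;>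
      simp_all [sval0, sval1, sval2, hPx, hPy] <;> norm_num
  · have hax := hCx hx
    have hby := hclxy hx hy
    rcases fin3_cases (σ x) with ha|ha|ha <;>
      simp_all [sval0, sval1, sval2, hPx, hPy] <;> norm_num
  · have hay := hCy hy
    have hbx := hclyx hy hx
    rcases fin3_cases (σ y) with hb|hb|hb <;>
      simp_all [sval0, sval1, sval2, hPx, hPy] <;> norm_num
  · simp_all [hPx, hPy]

lemma ham_sub (hr : ℝ) (σ τ : Cfg L) :
    ham L hr σ - ham L hr τ =
      (∑ x : Site L,
        ((((sval (σ (x+(1,0))) : ℝ) - (sval (σ x) : ℝ))^2 -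
          ((sval (τ (x+(1,0))) : ℝ) - (sval (τ x) : ℝ))^2) +
         (((sval (σ (x+(0,1))) : ℝ) - (sval (σ x) : ℝ))^2 -
          ((sval (τ (x+(0,1))) : ℝ) - (sval (τ x) : ℝ))^2)))
      - hr * ∑ x : Site L, ((sval (σ x) : ℝ) - (sval (τ x) : ℝ)) := by
  have e1 : (∑ x : Site L,
        (((sval (σ (x+(1,0))) : ℝ) - (sval (σ x) : ℝ))^2 +
         ((sval (σ (x+(0,1))) : ℝ) - (sval (σ x) : ℝ))^2)) -
      (∑ x : Site L,
        (((sval (τ (x+(1,0))) : ℝ) - (sval (τ x) : ℝ))^2 +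
         ((sval (τ (x+(0,1))) : ℝ) - (sval (τ x) : ℝ))^2)) =
      ∑ x : Site L,
        ((((sval (σ (x+(1,0))) : ℝ) - (sval (σ x) : ℝ))^2 -
          ((sval (τ (x+(1,0))) : ℝ) - (sval (τ x) : ℝ))^2) +
         (((sval (σ (x+(0,1))) : ℝ) - (sval (σ x) : ℝ))^2 -
          ((sval (τ (x+(0,1))) : ℝ) - (sval (τ x) : ℝ))^2)) := by
    rw [← Finset.sum_sub_distrib]
    exact Finset.sum_congr rfl fun x _ => by ring
  have e2 : (∑ x : Site L, ((sval (σ x) : ℝ))) - (∑ x : Site L, ((sval (τ x) : ℝ))) =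
      ∑ x : Site L, ((sval (σ x) : ℝ) - (sval (τ x) : ℝ)) := by
    rw [← Finset.sum_sub_distrib]
  rw [ham, ham, ← e1, ← e2]
  ring

lemma field_sum (σ : Cfg L) (fuel : ℕ) (hsub : comp L σ fuel ⊆ Asites L σ) :
    ∑ x : Site L, ((sval (σ x) : ℝ) - (sval (peeled L σ fuel x) : ℝ))
      = ((comp L σ fuel).card : ℝ) +
        (((comp L σ fuel).filter (fun x => σ x = 2)).card : ℝ) := by
  rw [← Finset.sum_subset (Finset.subset_univ (comp L σ fuel))
    (fun x _ hx => by simp [peeled, hx])]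
  have hcongr : ∀ x ∈ comp L σ fuel,
      ((sval (σ x) : ℝ) - (sval (peeled L σ fuel x) : ℝ))
        = 1 + (if σ x = 2 then (1:ℝ) else 0) := by
    intro x hx
    have hne := (mem_asites L σ x).1 (hsub hx)
    rcases fin3_cases (σ x) with ha|ha|ha <;>
      simp [peeled, hx, ha, sval0, sval1, sval2] at hne ⊢ <;> norm_num
  rw [Finset.sum_congr rfl hcongr, Finset.sum_add_distrib, Finset.sum_const,
    Finset.sum_boole]
  simp [nsmul_eq_mul]

lemma perOri_cast (S : Finset (Site L)) :
    ((perOri S : ℕ) : ℝ) =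
      ∑ x : Site L, (indTerm L S x (x+(1,0)) + indTerm L S x (x+(0,1))) := by
  rw [perOri, hPart, vPart]
  push_cast
  rw [← Finset.sum_add_distrib]
  refine Finset.sum_congr rfl fun x _ => ?_
  rw [indTerm, indTerm]
  try ring

lemma edge_bound (σ : Cfg L) (hne : (Asites L σ).Nonempty) (fuel : ℕ)
    (hcard : (Asites L σ).card ≤ fuel) :
    ((perOri (comp L σ fuel) : ℕ) : ℝ) +
      ((perOri ((comp L σ fuel).filter (fun x => σ x = 2)) : ℕ) : ℝ) ≤
    ∑ x : Site L,
        ((((sval (σ (x+(1,0))) : ℝ) - (sval (σ x) : ℝ))^2 -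
          ((sval (peeled L σ fuel (x+(1,0))) : ℝ) - (sval (peeled L σ fuel x) : ℝ))^2) +
         (((sval (σ (x+(0,1))) : ℝ) - (sval (σ x) : ℝ))^2 -
          ((sval (peeled L σ fuel (x+(0,1))) : ℝ) - (sval (peeled L σ fuel x) : ℝ))^2)) := by
  set C := comp L σ fuel with hC
  set Pp := C.filter (fun x => σ x = 2) with hPp
  rw [perOri_cast, perOri_cast, ← Finset.sum_add_distrib]
  refine Finset.sum_le_sum fun x _ => ?_
  have key : ∀ y : Site L, y ∈ nbrFinset L x →
      indTerm L C x y + indTerm L Pp x y ≤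
        ((sval (σ y) : ℝ) - (sval (σ x) : ℝ))^2 -
        ((sval (peeled L σ fuel y) : ℝ) - (sval (peeled L σ fuel x) : ℝ))^2 := by
    intro y hy
    have h1 : peeled L σ fuel y = if y ∈ C then 0 else σ y := rfl
    have h2 : peeled L σ fuel x = if x ∈ C then 0 else σ x := rfl
    rw [h1, h2]
    refine ptcore L C Pp σ x y (by simp [hPp]) (by simp [hPp])
      (fun hx => (mem_asites L σ x).1 (comp_subset L σ hne fuel hx))
      (fun hyc => (mem_asites L σ y).1 (comp_subset L σ hne fuel hyc))
      (fun hx hyc => ?_) (fun hyc hx => ?_)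
    · by_contra hns
      exact hyc (comp_closed L σ hne fuel hcard x hx y hy hns)
    · by_contra hns
      exact hx (comp_closed L σ hne fuel hcard y hyc x (nbr_symmFinset L x y hy) hns)
  have k1 := key (x + (1,0)) (by simp [nbrFinset])
  have k2 := key (x + (0,1)) (by simp [nbrFinset])
  linarith

lemma peel_energy (hr : ℝ) (n : ℕ) (hn : 1 ≤ n) (hh0 : 0 < hr) (hhn : hr * n < 2)
    (hL : 2*n+4 ≤ L) (σ : Cfg L) (hne : (Asites L σ).Nonempty)
    (hNK : Nsz L σ ≤ n*(n+1)+1) :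
    2 + (2/(n:ℝ) - hr) ≤ ham L hr σ - ham L hr (peeled L σ (n*(n+1)+1)) := by
  set fuel := n*(n+1)+1 with hfuel
  set C := comp L σ fuel with hC
  set Pp := C.filter (fun x => σ x = 2) with hPp
  have hsub : C ⊆ Asites L σ := comp_subset L σ hne fuel
  have hcard : (Asites L σ).card ≤ fuel := hNK
  have hm1 : 1 ≤ C.card := Finset.card_pos.2 ⟨peelRoot L σ, root_mem_comp L σ fuel⟩
  have hmK : C.card ≤ n*(n+1)+1 := le_trans (Finset.card_le_card hsub) hNK
  have hnpos : (0:ℝ) < (n:ℝ) := by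
    have : 0 < n := hn
    exact_mod_cast this
  have hCne : C.Nonempty := ⟨peelRoot L σ, root_mem_comp L σ fuel⟩
  have isoC := iso (L := L) n hn hL C hCne hmK
  have pC : (2:ℝ) * ((n:ℝ) + (C.card : ℝ)) ≤ (n:ℝ) * ((perOri C : ℕ) : ℝ) := by
    exact_mod_cast isoC
  have hq : hr * ((Pp.card : ℕ) : ℝ) ≤ ((perOri Pp : ℕ) : ℝ) := by
    rcases Nat.eq_zero_or_pos Pp.card with h0 | hpos
    · rw [h0]
      simp
    · have hPne : Pp.Nonempty := Finset.card_pos.1 hpos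
      have hPcard : Pp.card ≤ n*(n+1)+1 :=
        le_trans (Finset.card_le_card (Finset.filter_subset _ _)) hmK
      have isoP := iso (L := L) n hn hL Pp hPne hPcard
      have pP : (2:ℝ) * ((n:ℝ) + (Pp.card : ℝ)) ≤ (n:ℝ) * ((perOri Pp : ℕ) : ℝ) := by
        exact_mod_cast isoP
      have hq0 : (0:ℝ) ≤ (Pp.card : ℝ) := Nat.cast_nonneg _
      nlinarith
  have heq := ham_sub L hr σ (peeled L σ fuel)
  have hfs := field_sum L σ fuel hsub
  have heb := edge_bound L σ hne fuel hcard
  rw [heq, hfs]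
  have hperC : (2:ℝ) + 2*((C.card:ℕ):ℝ)/(n:ℝ) ≤ ((perOri C : ℕ) : ℝ) := by
    rw [show (2:ℝ) + 2*((C.card:ℕ):ℝ)/(n:ℝ) = (2*((n:ℝ)+(C.card:ℝ)))/(n:ℝ) by
      field_simp]
    rw [div_le_iff₀ hnpos]
    nlinarith
  have hm1' : (1:ℝ) ≤ ((C.card:ℕ):ℝ) := by exact_mod_cast hm1
  have hmarg : (0:ℝ) ≤ 2/(n:ℝ) - hr := by
    rw [le_sub_iff_add_le, zero_add, le_div_iff₀ hnpos]
    linarith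
  have key : (2:ℝ)/(n:ℝ) - hr ≤ 2*((C.card:ℕ):ℝ)/(n:ℝ) - hr*((C.card:ℕ):ℝ) := by
    have h2 : 2*((C.card:ℕ):ℝ)/(n:ℝ) - hr*((C.card:ℕ):ℝ)
        = ((C.card:ℕ):ℝ) * (2/(n:ℝ) - hr) := by field_simp
    rw [h2]
    nlinarith
  nlinarith [heb]

end Energy

section Count

variable (L : ℕ) [NeZero L]

def decode (K : ℕ) (r : Site L) (p : Fin (2*K+1) × Fin (2*K+1)) : Site L :=
  r + (((((p.1 : ℕ) : ℤ) - (K : ℤ)) : ZMod L), ((((p.2 : ℕ) : ℤ) - (K : ℤ)) : ZMod L))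

def decoF (K : ℕ) (σ : Cfg L) : Fin (2*K+1) × Fin (2*K+1) → Fin 3 :=
  fun p => if decode L K (peelRoot L σ) p ∈ comp L σ K
    then σ (decode L K (peelRoot L σ) p) else 0

def Phi (K : ℕ) (σ : Cfg L) :
    (Site L × (Fin (2*K+1) × Fin (2*K+1) → Fin 3)) × Cfg L :=
  ((peelRoot L σ, decoF L K σ), peeled L σ K)

lemma encode_exists (K : ℕ) (σ : Cfg L) (x : Site L) (hx : x ∈ comp L σ K) :
    ∃ p : Fin (2*K+1) × Fin (2*K+1), decode L K (peelRoot L σ) p = x := by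
  obtain ⟨i, j, hi, hj, hval⟩ := comp_offsets L σ K x hx
  have hi' : (0:ℤ) ≤ i + K := by omega
  have hj' : (0:ℤ) ≤ j + K := by omega
  have hib : (i + K).toNat < 2*K+1 := by omega
  have hjb : (j + K).toNat < 2*K+1 := by omega
  refine ⟨(⟨(i + K).toNat, hib⟩, ⟨(j + K).toNat, hjb⟩), ?_⟩
  rw [decode, hval]
  congr 2
  · have : (((i + (K:ℤ)).toNat : ℤ)) = i + K := Int.toNat_of_nonneg hi'
    rw [show ((((⟨(i + K).toNat, hib⟩ : Fin (2*K+1)) : ℕ) : ℤ)) = ((i + (K:ℤ)).toNat : ℤ) from rfl]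
    rw [this]
    push_cast
    ring
  · have : (((j + (K:ℤ)).toNat : ℤ)) = j + K := Int.toNat_of_nonneg hj'
    rw [show ((((⟨(j + K).toNat, hjb⟩ : Fin (2*K+1)) : ℕ) : ℤ)) = ((j + (K:ℤ)).toNat : ℤ) from rfl]
    rw [this]
    push_cast
    ring

lemma decoF_ne (K : ℕ) (σ : Cfg L) (hne : (Asites L σ).Nonempty)
    (p : Fin (2*K+1) × Fin (2*K+1)) :
    decoF L K σ p ≠ 0 ↔ decode L K (peelRoot L σ) p ∈ comp L σ K := by
  rw [decoF]
  by_cases hmem : decode L K (peelRoot L σ) p ∈ comp L σ K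
  · rw [if_pos hmem]
    simp only [hmem, iff_true]
    exact (mem_asites L σ _).1 (comp_subset L σ hne K hmem)
  · rw [if_neg hmem]
    simp [hmem]

lemma Phi_inj (K : ℕ) (σ₁ σ₂ : Cfg L) (h₁ : (Asites L σ₁).Nonempty)
    (h₂ : (Asites L σ₂).Nonempty) (heq : Phi L K σ₁ = Phi L K σ₂) : σ₁ = σ₂ := by
  have hr : peelRoot L σ₁ = peelRoot L σ₂ := congrArg (fun y => y.1.1) heq
  have hf : decoF L K σ₁ = decoF L K σ₂ := congrArg (fun y => y.1.2) heq
  have hp : peeled L σ₁ K = peeled L σ₂ K := congrArg (fun y => y.2) heq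
  funext x
  by_cases hx1 : x ∈ comp L σ₁ K
  · obtain ⟨p, hdp⟩ := encode_exists L K σ₁ x hx1
    have hv1 : decoF L K σ₁ p = σ₁ x := by rw [decoF, hdp, if_pos hx1]
    have hne1 : decoF L K σ₁ p ≠ 0 := by
      rw [hv1]; exact (mem_asites L σ₁ x).1 (comp_subset L σ₁ h₁ K hx1)
    have hne2 : decoF L K σ₂ p ≠ 0 := by rw [← hf]; exact hne1
    have hx2 : decode L K (peelRoot L σ₂) p ∈ comp L σ₂ K := (decoF_ne L K σ₂ h₂ p).1 hne2
    have hdp2 : decode L K (peelRoot L σ₂) p = x := by rw [← hr]; exact hdp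
    have hv2 : decoF L K σ₂ p = σ₂ x := by
      rw [decoF, hdp2, if_pos (hdp2 ▸ hx2)]
    rw [← hv1, ← hv2, hf]
  · by_cases hx2 : x ∈ comp L σ₂ K
    · obtain ⟨p, hdp⟩ := encode_exists L K σ₂ x hx2
      have hv2 : decoF L K σ₂ p = σ₂ x := by rw [decoF, hdp, if_pos hx2]
      have hne2 : decoF L K σ₂ p ≠ 0 := by
        rw [hv2]; exact (mem_asites L σ₂ x).1 (comp_subset L σ₂ h₂ K hx2)
      have hne1 : decoF L K σ₁ p ≠ 0 := by rw [hf]; exact hne2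
      have hx1' : decode L K (peelRoot L σ₁) p ∈ comp L σ₁ K := (decoF_ne L K σ₁ h₁ p).1 hne1
      have hdp1 : decode L K (peelRoot L σ₁) p = x := by rw [hr]; exact hdp
      exact absurd (hdp1 ▸ hx1') hx1
    · have e1 : peeled L σ₁ K x = σ₁ x := by rw [peeled, if_neg hx1]
      have e2 : peeled L σ₂ K x = σ₂ x := by rw [peeled, if_neg hx2]
      rw [← e1, ← e2, hp]

lemma nsz_zero_iff (σ : Cfg L) : Nsz L σ = 0 ↔ σ = cminus L := by
  rw [Nsz, Finset.card_eq_zero]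
  constructor
  · intro hA
    funext x
    by_contra hc
    have : x ∈ Asites L σ := (mem_asites L σ x).2 hc
    rw [hA] at this
    exact absurd this (Finset.notMem_empty x)
  · intro hc
    subst hc
    ext x
    simp [Asites, cminus]

end Count

section Sums

variable (L : ℕ) [NeZero L]

def w (hr β : ℝ) (σ : Cfg L) : ℝ :=
  Real.exp (-β * (ham L hr σ - ham L hr (cminus L)))

lemma w_pos (hr β : ℝ) (σ : Cfg L) : 0 < w L hr β σ := Real.exp_pos _

def Tsum (hr β : ℝ) (k : ℕ) : ℝ :=
  ∑ σ : Cfg L, if Nsz L σ ≤ k then w L hr β σ else 0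

def Usum (hr β : ℝ) (k : ℕ) : ℝ :=
  ∑ σ : Cfg L, if Nsz L σ = k then w L hr β σ else 0

lemma T_nonneg (hr β : ℝ) (k : ℕ) : 0 ≤ Tsum L hr β k := by
  refine Finset.sum_nonneg fun σ _ => ?_
  by_cases hσ : Nsz L σ ≤ k
  · rw [if_pos hσ]; exact le_of_lt (w_pos L hr β σ)
  · rw [if_neg hσ]

lemma T_zero (hr β : ℝ) : Tsum L hr β 0 = 1 := by
  rw [Tsum, Finset.sum_eq_single (cminus L)]
  · rw [if_pos (by rw [Nat.le_zero, nsz_zero_iff])]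
    simp [w]
  · intro σ _ hσ
    rw [if_neg]
    intro hc
    exact hσ ((nsz_zero_iff L σ).1 (Nat.le_zero.1 hc))
  · intro hmem
    exact absurd (Finset.mem_univ _) hmem

lemma T_succ (hr β : ℝ) (k : ℕ) :
    Tsum L hr β (k+1) = Tsum L hr β k + Usum L hr β (k+1) := by
  rw [Tsum, Tsum, Usum, ← Finset.sum_add_distrib]
  refine Finset.sum_congr rfl fun σ _ => ?_
  rcases Nat.lt_trichotomy (Nsz L σ) (k+1) with hlt | heq | hgt
  · rw [if_pos (by omega), if_pos (by omega), if_neg (by omega), add_zero]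
  · rw [if_pos (by omega), if_neg (by omega), if_pos heq, zero_add]
  · rw [if_neg (by omega), if_neg (by omega), if_neg (by omega), add_zero]

lemma U_le (hr β : ℝ) (n : ℕ) (hn : 1 ≤ n) (hh0 : 0 < hr) (hhn : hr * n < 2)
    (hL : 2*n+4 ≤ L) (hβ : 0 ≤ β) (k : ℕ) (hk : 1 ≤ k) (hkK : k ≤ n*(n+1)+1) :
    Usum L hr β k ≤
      ((L:ℝ)*(L:ℝ)*(3:ℝ)^((2*(n*(n+1)+1)+1)*(2*(n*(n+1)+1)+1))) *
        Real.exp (-β*(2+(2/(n:ℝ)-hr))) * Tsum L hr β (k-1) := by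
  classical
  set K := n*(n+1)+1 with hK
  set δ := 2/(n:ℝ) - hr with hδ
  set c := Real.exp (-β*(2+δ)) with hc
  have hc0 : 0 ≤ c := le_of_lt (Real.exp_pos _)
  have hU : Usum L hr β k =
      ∑ σ ∈ Finset.univ.filter (fun σ : Cfg L => Nsz L σ = k), w L hr β σ :=
    (Finset.sum_filter _ _).symm
  have hne : ∀ σ ∈ Finset.univ.filter (fun σ : Cfg L => Nsz L σ = k),
      (Asites L σ).Nonempty := by
    intro σ hσ
    have := (Finset.mem_filter.1 hσ).2
    rw [← Finset.card_pos, ← Nsz, this]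
    omega
  have hstep : ∀ σ ∈ Finset.univ.filter (fun σ : Cfg L => Nsz L σ = k),
      w L hr β σ ≤ c * w L hr β (peeled L σ K) := by
    intro σ hσ
    have hNk := (Finset.mem_filter.1 hσ).2
    have hham := peel_energy L hr n hn hh0 hhn hL σ (hne σ hσ) (by rw [hNk]; exact hkK)
    rw [← hK] at hham
    rw [← hδ] at hham
    have hsplit : w L hr β σ =
        Real.exp (-β * (ham L hr σ - ham L hr (peeled L σ K))) * w L hr β (peeled L σ K) := by
      rw [w, w, ← Real.exp_add]
      congr 1
      ring
    rw [hsplit]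
    refine mul_le_mul_of_nonneg_right ?_ (le_of_lt (w_pos L hr β _))
    rw [hc]
    refine Real.exp_le_exp.2 ?_
    have := mul_le_mul_of_nonpos_left hham (neg_nonpos.2 hβ)
    linarith
  set g : (Site L × (Fin (2*K+1) × Fin (2*K+1) → Fin 3)) × Cfg L → ℝ :=
    fun y => if Nsz L y.2 ≤ k - 1 then w L hr β y.2 else 0 with hg
  have hgPhi : ∀ σ ∈ Finset.univ.filter (fun σ : Cfg L => Nsz L σ = k),
      w L hr β (peeled L σ K) = g (Phi L K σ) := by
    intro σ hσ
    have hNk := (Finset.mem_filter.1 hσ).2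
    have hlt := nsz_peeled_lt L σ (hne σ hσ) K
    rw [hg]
    simp only [Phi]
    exact (if_pos (by omega : Nsz L (peeled L σ K) ≤ k - 1)).symm
  have himg : ∑ σ ∈ Finset.univ.filter (fun σ : Cfg L => Nsz L σ = k), g (Phi L K σ)
      = ∑ y ∈ (Finset.univ.filter (fun σ : Cfg L => Nsz L σ = k)).image (Phi L K), g y := by
    rw [Finset.sum_image]
    intro σ₁ h1 σ₂ h2 hPhieq
    exact Phi_inj L K σ₁ σ₂ (hne σ₁ h1) (hne σ₂ h2) hPhieq
  have hsub : ∑ y ∈ (Finset.univ.filter (fun σ : Cfg L => Nsz L σ = k)).image (Phi L K), g y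
      ≤ ∑ y : (Site L × (Fin (2*K+1) × Fin (2*K+1) → Fin 3)) × Cfg L, g y := by
    refine Finset.sum_le_sum_of_subset_of_nonneg (Finset.subset_univ _) ?_
    intro y _ _
    rw [hg]
    dsimp only
    by_cases hy : Nsz L y.2 ≤ k - 1
    · rw [if_pos hy]; exact le_of_lt (w_pos L hr β _)
    · rw [if_neg hy]
  have hprod : ∑ y : (Site L × (Fin (2*K+1) × Fin (2*K+1) → Fin 3)) × Cfg L, g y
      = (Fintype.card (Site L × (Fin (2*K+1) × Fin (2*K+1) → Fin 3)) : ℝ) *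
          Tsum L hr β (k-1) := by
    rw [Fintype.sum_prod_type]
    have : ∀ d : Site L × (Fin (2*K+1) × Fin (2*K+1) → Fin 3),
        (∑ τ : Cfg L, g (d, τ)) = Tsum L hr β (k-1) := by
      intro d
      rw [Tsum]
    rw [Finset.sum_congr rfl (fun d _ => this d), Finset.sum_const, Finset.card_univ,
      nsmul_eq_mul]
  have hcard : (Fintype.card (Site L × (Fin (2*K+1) × Fin (2*K+1) → Fin 3)) : ℝ)
      = (L:ℝ)*(L:ℝ)*(3:ℝ)^((2*K+1)*(2*K+1)) := by
    simp only [Fintype.card_prod, Fintype.card_fun, ZMod.card, Fintype.card_fin]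
    push_cast
    ring
  calc Usum L hr β k = ∑ σ ∈ Finset.univ.filter (fun σ : Cfg L => Nsz L σ = k), w L hr β σ := hU
  _ ≤ ∑ σ ∈ Finset.univ.filter (fun σ : Cfg L => Nsz L σ = k), c * w L hr β (peeled L σ K) :=
      Finset.sum_le_sum hstep
  _ = c * ∑ σ ∈ Finset.univ.filter (fun σ : Cfg L => Nsz L σ = k), g (Phi L K σ) := by
      rw [Finset.mul_sum]
      exact Finset.sum_congr rfl fun σ hσ => by rw [hgPhi σ hσ]
  _ ≤ c * ((L:ℝ)*(L:ℝ)*(3:ℝ)^((2*K+1)*(2*K+1)) * Tsum L hr β (k-1)) := by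
      refine mul_le_mul_of_nonneg_left ?_ hc0
      rw [himg] at *
      calc _ ≤ _ := hsub
      _ = _ := by rw [hprod, hcard]
  _ = ((L:ℝ)*(L:ℝ)*(3:ℝ)^((2*K+1)*(2*K+1))) * Real.exp (-β*(2+δ)) * Tsum L hr β (k-1) := by
      rw [hc]; ring

end Sums

section Main

variable (L : ℕ) [NeZero L]

lemma T_bound (hr β : ℝ) (n : ℕ) (hn : 1 ≤ n) (hh0 : 0 < hr) (hhn : hr * n < 2)
    (hL : 2*n+4 ≤ L) (hβ : 0 ≤ β) (ε : ℝ)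
    (hεdef : ε = (L:ℝ)*(L:ℝ)*(3:ℝ)^((2*(n*(n+1)+1)+1)*(2*(n*(n+1)+1)+1)) *
      Real.exp (-β*(2+(2/(n:ℝ)-hr))))
    (hε1 : ε ≤ 1) :
    ∀ k, k ≤ n*(n+1)+1 →
      Tsum L hr β k ≤ 2^k ∧
      Tsum L hr β k ≤ 1 + ε * k * 2^(n*(n+1)+1) := by
  have hε0 : 0 ≤ ε := by rw [hεdef]; positivity
  intro k
  induction k with
  | zero =>
      intro _
      rw [T_zero]
      constructor
      · norm_num
      · simp
  | succ k ih =>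
      intro hk1
      obtain ⟨ih1, ih2⟩ := ih (by omega)
      have hU := U_le L hr β n hn hh0 hhn hL hβ (k+1) (by omega) hk1
      rw [Nat.add_sub_cancel, ← hεdef] at hU
      have hTnn := T_nonneg L hr β k
      have hTs := T_succ L hr β k
      have hpow : (2:ℝ)^k ≤ 2^(n*(n+1)+1) := by
        refine pow_le_pow_right₀ one_le_two (by omega)
      constructor
      · rw [hTs, pow_succ]
        nlinarith
      · rw [hTs]
        have hcast : ((k+1 : ℕ) : ℝ) = (k:ℝ) + 1 := by push_cast; ring
        rw [hcast]
        nlinarith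
  
lemma valley_bound (n : ℕ) (σ : Cfg L) (hσ : σ ∈ valleyM L n) (hnc : σ ≠ cminus L) :
    1 ≤ Nsz L σ ∧ Nsz L σ ≤ n*(n+1)+1 := by
  constructor
  · have : Nsz L σ ≠ 0 := fun hc => hnc ((nsz_zero_iff L σ).1 hc)
    omega
  · rcases hσ with hN | hR
    · have hN' : Nsz L σ ≤ n*(n+1) := hN
      omega
    · obtain ⟨S, z, hrect, hz, hAs, hsp⟩ := hR
      rw [Nsz, hAs]
      have h1 := Finset.card_insert_le z S
      have hS : S.card ≤ n*(n+1) := by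
        obtain ⟨a, hc | hc⟩ := hrect
        · rw [hc, rect]
          refine le_trans (Finset.card_image_le) ?_
          rw [Finset.card_product, Finset.card_range, Finset.card_range]
        · rw [hc, rect]
          refine le_trans (Finset.card_image_le) ?_
          rw [Finset.card_product, Finset.card_range, Finset.card_range, mul_comm]
      omega

end Main

end P74

/-- Lemma p74 : the Gibbs measure of the valley of `-1`, relative to the weight of `-1`,
is bounded by `C₀ |Λ_L| e^{-2β}`. -/
theorem stmt_3 (h : ℝ) (h0 : 0 < h) (h2 : h < 2)
    (hirr : ∀ m : ℤ, (2 : ℝ) / h ≠ (m : ℝ)) :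
    ∃ C0 : ℝ, 0 < C0 ∧ ∀ β : ℝ, C0 ≤ β → ∀ (L : ℕ) [NeZero L],
      2 * (BC.n0 h + 2) ≤ L → (L : ℝ) ^ 2 * Real.exp (-2 * β) ≤ 1 / 2 →
      (∑ σ : BC.Cfg L,
        if σ ∈ BC.valleyM L (BC.n0 h) ∧ σ ≠ BC.cminus L
        then Real.exp (-β * (BC.ham L h σ - BC.ham L h (BC.cminus L))) else 0)
      ≤ C0 * (L : ℝ) ^ 2 * Real.exp (-2 * β) := by
  classical
  set n := BC.n0 h with hn0
  have h2h : (1:ℝ) ≤ 2 / h := by rw [le_div_iff₀ h0]; linarith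
  have hn1 : 1 ≤ n := by
    rw [hn0, BC.n0]
    exact Nat.le_floor (by exact_mod_cast h2h)
  have hnposR : (0:ℝ) < (n:ℝ) := by exact_mod_cast hn1
  have hfl : (n:ℝ) ≤ 2/h := by
    rw [hn0, BC.n0]
    exact Nat.floor_le (by positivity)
  have hne2 : (n:ℝ) ≠ 2/h := by
    intro hc
    exact hirr n (by rw [← hc]; push_cast; ring)
  have hlt : (n:ℝ) < 2/h := lt_of_le_of_ne hfl hne2
  have hhn : h * (n:ℝ) < 2 := by
    have := (lt_div_iff₀ h0).1 hlt
    linarith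
  set K := n*(n+1)+1 with hK
  set E := (2*K+1)*(2*K+1) with hE
  set δ := 2/(n:ℝ) - h with hδ
  have hδ0 : (0:ℝ) < δ := by
    rw [hδ, sub_pos, lt_div_iff₀ hnposR]
    linarith
  set M := (3:ℝ)^E with hM
  have hM1 : (1:ℝ) ≤ M := one_le_pow₀ (by norm_num)
  have hMpos : (0:ℝ) < M := by positivity
  have hlogM0 : 0 ≤ Real.log M := Real.log_nonneg hM1
  have hK1 : (1:ℝ) ≤ (K:ℝ) := by exact_mod_cast Nat.one_le_iff_ne_zero.2 (by omega)
  have hA0 : (0:ℝ) ≤ (K:ℝ) * 2^K * M := by positivity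
  set C0 := (K:ℝ) * 2^K * M + Real.log M / δ + 1 with hC0
  have hC0pos : 0 < C0 := by
    have : 0 ≤ Real.log M / δ := div_nonneg hlogM0 (le_of_lt hδ0)
    rw [hC0]; linarith
  refine ⟨C0, hC0pos, ?_⟩
  intro β hβC0 L instL hLn hLe
  have hβ0 : (0:ℝ) ≤ β := le_trans (le_of_lt hC0pos) hβC0
  have hL' : 2*n+4 ≤ L := by omega
  have hexpsplit : Real.exp (-β*(2+δ)) = Real.exp (-2*β) * Real.exp (-(δ*β)) := by
    rw [← Real.exp_add]; ring_nf
  have hlogMβ : Real.log M ≤ δ * β := by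
    have h1 : Real.log M / δ ≤ C0 := by rw [hC0]; linarith
    have h2 : Real.log M / δ ≤ β := le_trans h1 hβC0
    have := (div_le_iff₀ hδ0).1 h2
    linarith
  have hexpM : M * Real.exp (-(δ*β)) ≤ 1 := by
    have h1 : Real.exp (-(δ*β)) ≤ Real.exp (-Real.log M) :=
      Real.exp_le_exp.2 (by linarith)
    have h2 : Real.exp (-Real.log M) = 1/M := by
      rw [Real.exp_neg, Real.exp_log hMpos, one_div]
    calc M * Real.exp (-(δ*β)) ≤ M * (1/M) :=
          mul_le_mul_of_nonneg_left (by rw [← h2]; exact h1) (le_of_lt hMpos)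
    _ = 1 := by field_simp
  have hL2 : (L:ℝ)*(L:ℝ) = (L:ℝ)^2 := by ring
  have hexpnn : (0:ℝ) ≤ Real.exp (-2*β) := le_of_lt (Real.exp_pos _)
  have hexpδnn : (0:ℝ) ≤ Real.exp (-(δ*β)) := le_of_lt (Real.exp_pos _)
  set ε := (L:ℝ)*(L:ℝ)*M * Real.exp (-β*(2+δ)) with hε
  have hεeq : ε = ((L:ℝ)^2 * Real.exp (-2*β)) * (M * Real.exp (-(δ*β))) := by
    rw [hε, hexpsplit]; ring
  have hε0 : 0 ≤ ε := by rw [hε]; positivity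
  have hεhalf : ε ≤ 1/2 := by
    rw [hεeq]
    calc ((L:ℝ)^2 * Real.exp (-2*β)) * (M * Real.exp (-(δ*β)))
        ≤ (1/2 : ℝ) * 1 := by
          refine mul_le_mul hLe hexpM (by positivity) (by norm_num)
    _ = 1/2 := by norm_num
  have hε1 : ε ≤ 1 := by linarith
  have hεL2 : ε ≤ (L:ℝ)^2 * Real.exp (-2*β) := by
    rw [hεeq]
    exact mul_le_of_le_one_right (by positivity) hexpM
  have hTb := P74.T_bound L h β n hn1 h0 hhn hL' hβ0 ε (by rw [hε, hδ]) hε1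
  obtain ⟨-, hTK⟩ := hTb K le_rfl
  -- V sum
  set V := ∑ σ : BC.Cfg L, (if 1 ≤ BC.Nsz L σ ∧ BC.Nsz L σ ≤ K then P74.w L h β σ else 0) with hV
  have hTV : P74.Tsum L h β K = 1 + V := by
    have hsplit : ∀ σ : BC.Cfg L, (if BC.Nsz L σ ≤ K then P74.w L h β σ else 0) =
        (if BC.Nsz L σ ≤ 0 then P74.w L h β σ else 0) +
        (if 1 ≤ BC.Nsz L σ ∧ BC.Nsz L σ ≤ K then P74.w L h β σ else 0) := by
      intro σ
      rcases Nat.eq_zero_or_pos (BC.Nsz L σ) with h1 | h1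
      · rw [if_pos (by omega), if_pos (by omega), if_neg (by omega), add_zero]
      · rcases le_or_gt (BC.Nsz L σ) K with h2 | h2
        · rw [if_pos h2, if_neg (by omega), if_pos (by omega), zero_add]
        · rw [if_neg (by omega), if_neg (by omega), if_neg (by omega), add_zero]
    have : P74.Tsum L h β K = P74.Tsum L h β 0 + V := by
      rw [P74.Tsum, P74.Tsum, hV, ← Finset.sum_add_distrib]
      exact Finset.sum_congr rfl fun σ _ => hsplit σ
    rw [this, P74.T_zero]
  have hgoalV : (∑ σ : BC.Cfg L,
        if σ ∈ BC.valleyM L (BC.n0 h) ∧ σ ≠ BC.cminus L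
        then Real.exp (-β * (BC.ham L h σ - BC.ham L h (BC.cminus L))) else 0) ≤ V := by
    rw [hV]
    refine Finset.sum_le_sum fun σ _ => ?_
    by_cases hcond : σ ∈ BC.valleyM L (BC.n0 h) ∧ σ ≠ BC.cminus L
    · rw [if_pos hcond, if_pos]
      · exact le_of_eq rfl
      · exact P74.valley_bound L n σ hcond.1 hcond.2
    · rw [if_neg hcond]
      by_cases h2 : 1 ≤ BC.Nsz L σ ∧ BC.Nsz L σ ≤ K
      · rw [if_pos h2]; exact le_of_lt (P74.w_pos L h β σ)
      · rw [if_neg h2]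
  have hVbound : V ≤ ε * (K:ℝ) * 2^K := by
    have : V = P74.Tsum L h β K - 1 := by rw [hTV]; ring
    rw [this]
    linarith
  have hfin : ε * (K:ℝ) * 2^K ≤ C0 * (L:ℝ)^2 * Real.exp (-2*β) := by
    have hKC0 : (K:ℝ) * 2^K ≤ C0 := by
      have h1 : (K:ℝ) * 2^K ≤ (K:ℝ) * 2^K * M := by nlinarith [hA0]
      have h2 : 0 ≤ Real.log M / δ := div_nonneg hlogM0 (le_of_lt hδ0)
      rw [hC0]; linarith
    calc ε * (K:ℝ) * 2^K = ε * ((K:ℝ) * 2^K) := by ring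
    _ ≤ ((L:ℝ)^2 * Real.exp (-2*β)) * ((K:ℝ) * 2^K) :=
          mul_le_mul_of_nonneg_right hεL2 (by positivity)
    _ ≤ ((L:ℝ)^2 * Real.exp (-2*β)) * C0 := by
          refine mul_le_mul_of_nonneg_left hKC0 (by positivity)
    _ = C0 * (L:ℝ)^2 * Real.exp (-2*β) := by ring
  have hgoal2 : Real.exp (-2*β) = Real.exp (-2*β) := rfl
  calc (∑ σ : BC.Cfg L,
        if σ ∈ BC.valleyM L (BC.n0 h) ∧ σ ≠ BC.cminus L
        then Real.exp (-β * (BC.ham L h σ - BC.ham L h (BC.cminus L))) else 0)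
      ≤ V := hgoalV
  _ ≤ ε * (K:ℝ) * 2^K := hVbound
  _ ≤ C0 * (L:ℝ)^2 * Real.exp (-2*β) := hfin
end
end

section
/- There exists a finite constant C₀, depending only on h, such that for all β ≥ C₀ and all L ≥ 2(n₀+2): Σ_{σ ∈ B₂} Σ_{σ'} min(e^{−βℍ(σ)}, e^{−βℍ(σ')}) ≤ C₀·|Λ_L|·e^{−βΓ_c}·( |Λ_L|·e^{−2β} + e^{−(10−h)β} ), where B₂ = R⁺ \ Rᵃ, the inner sum runs over all σ' ∈ V₋₁ \ ((B \ R) ∪ (R⁺ \ Rᵃ)) which differ from σ at exactly one site, and Γ_c = 4(n₀+1) − h·(n₀(n₀+1)+1−|Λ_L|). -/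
open Classical Finset Filter Topology

noncomputable section

namespace BC
variable {L : ℕ} [NeZero L]

lemma val_add_one (hL : 2 ≤ L) (w : ZMod L) :
    (w+1).val = w.val + 1 ∨ (w.val = L - 1 ∧ (w+1).val = 0) := by
  have h1 : (1 : ZMod L).val = 1 := by
    rw [ZMod.val_one_eq_one_mod, Nat.mod_eq_of_lt hL]
  have h2 := ZMod.val_add w 1
  rw [h1] at h2
  have hw := ZMod.val_lt w
  rcases lt_or_eq_of_le (Nat.succ_le_of_lt hw) with h | h
  · left; rw [h2, Nat.mod_eq_of_lt h]
  · right; refine ⟨by omega, ?_⟩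
    rw [h2, show w.val + 1 = L from h, Nat.mod_self]

lemma val_sub_one (hL : 2 ≤ L) (w : ZMod L) :
    (w.val ≠ 0 ∧ (w-1).val = w.val - 1) ∨ (w.val = 0 ∧ (w-1).val = L - 1) := by
  rcases val_add_one hL (w-1) with h | h
  · rw [sub_add_cancel] at h; left; omega
  · rw [sub_add_cancel] at h; right; omega

lemma mem_rect {s t : ℕ} (hs : s ≤ L) (ht : t ≤ L) (a x : Site L) :
    x ∈ rect L a s t ↔ (x.1 - a.1).val < s ∧ (x.2 - a.2).val < t := by
  constructor
  · intro hx
    simp only [rect, Finset.mem_image, Finset.mem_product, Finset.mem_range] at hx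
    obtain ⟨⟨i, j⟩, ⟨hi, hj⟩, rfl⟩ := hx
    simp only [add_sub_cancel_left]
    rw [ZMod.val_cast_of_lt (lt_of_lt_of_le hi hs),
        ZMod.val_cast_of_lt (lt_of_lt_of_le hj ht)]
    exact ⟨hi, hj⟩
  · rintro ⟨h1, h2⟩
    simp only [rect, Finset.mem_image, Finset.mem_product, Finset.mem_range]
    refine ⟨((x.1 - a.1).val, (x.2 - a.2).val), ⟨h1, h2⟩, ?_⟩
    refine Prod.ext ?_ ?_
    · show a.1 + (((x.1 - a.1).val : ℕ) : ZMod L) = x.1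
      rw [ZMod.natCast_zmod_val]; ring
    · show a.2 + (((x.2 - a.2).val : ℕ) : ZMod L) = x.2
      rw [ZMod.natCast_zmod_val]; ring

lemma card_rect {s t : ℕ} (hs : s ≤ L) (ht : t ≤ L) (a : Site L) :
    (rect L a s t).card = s * t := by
  rw [rect, Finset.card_image_of_injOn, Finset.card_product, Finset.card_range,
    Finset.card_range]
  rintro ⟨i, j⟩ hij ⟨i', j'⟩ hij' he
  simp only [Finset.mem_coe, Finset.mem_product, Finset.mem_range] at hij hij'
  have e1 : a.1 + (i : ZMod L) = a.1 + (i' : ZMod L) := congrArg Prod.fst he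
  have e2 : a.2 + (j : ZMod L) = a.2 + (j' : ZMod L) := congrArg Prod.snd he
  have h1 := congrArg ZMod.val (add_left_cancel e1)
  have h2 := congrArg ZMod.val (add_left_cancel e2)
  rw [ZMod.val_cast_of_lt (lt_of_lt_of_le hij.1 hs),
      ZMod.val_cast_of_lt (lt_of_lt_of_le hij'.1 hs)] at h1
  rw [ZMod.val_cast_of_lt (lt_of_lt_of_le hij.2 ht),
      ZMod.val_cast_of_lt (lt_of_lt_of_le hij'.2 ht)] at h2
  exact Prod.ext h1 h2

lemma mem_rect_addx {s t : ℕ} (hs : s ≤ L) (ht : t ≤ L) (a z : Site L) :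
    z + ((1 : ZMod L), (0 : ZMod L)) ∈ rect L a s t ↔
      ((z.1 - a.1) + 1).val < s ∧ (z.2 - a.2).val < t := by
  have e1 : (z + ((1 : ZMod L), (0 : ZMod L))).1 - a.1 = (z.1 - a.1) + 1 := by
    show z.1 + 1 - a.1 = _; ring
  have e2 : (z + ((1 : ZMod L), (0 : ZMod L))).2 - a.2 = z.2 - a.2 := by
    show z.2 + 0 - a.2 = _; ring
  rw [mem_rect hs ht, e1, e2]

lemma mem_rect_subx {s t : ℕ} (hs : s ≤ L) (ht : t ≤ L) (a z : Site L) :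
    z - ((1 : ZMod L), (0 : ZMod L)) ∈ rect L a s t ↔
      ((z.1 - a.1) - 1).val < s ∧ (z.2 - a.2).val < t := by
  have e1 : (z - ((1 : ZMod L), (0 : ZMod L))).1 - a.1 = (z.1 - a.1) - 1 := by
    show z.1 - 1 - a.1 = _; ring
  have e2 : (z - ((1 : ZMod L), (0 : ZMod L))).2 - a.2 = z.2 - a.2 := by
    show z.2 - 0 - a.2 = _; ring
  rw [mem_rect hs ht, e1, e2]

lemma mem_rect_addy {s t : ℕ} (hs : s ≤ L) (ht : t ≤ L) (a z : Site L) :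
    z + ((0 : ZMod L), (1 : ZMod L)) ∈ rect L a s t ↔
      (z.1 - a.1).val < s ∧ ((z.2 - a.2) + 1).val < t := by
  have e1 : (z + ((0 : ZMod L), (1 : ZMod L))).1 - a.1 = z.1 - a.1 := by
    show z.1 + 0 - a.1 = _; ring
  have e2 : (z + ((0 : ZMod L), (1 : ZMod L))).2 - a.2 = (z.2 - a.2) + 1 := by
    show z.2 + 1 - a.2 = _; ring
  rw [mem_rect hs ht, e1, e2]

lemma mem_rect_suby {s t : ℕ} (hs : s ≤ L) (ht : t ≤ L) (a z : Site L) :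
    z - ((0 : ZMod L), (1 : ZMod L)) ∈ rect L a s t ↔
      (z.1 - a.1).val < s ∧ ((z.2 - a.2) - 1).val < t := by
  have e1 : (z - ((0 : ZMod L), (1 : ZMod L))).1 - a.1 = z.1 - a.1 := by
    show z.1 - 0 - a.1 = _; ring
  have e2 : (z - ((0 : ZMod L), (1 : ZMod L))).2 - a.2 = (z.2 - a.2) - 1 := by
    show z.2 - 1 - a.2 = _; ring
  rw [mem_rect hs ht, e1, e2]

lemma rect_nbr_unique {s t : ℕ} (hs1 : 1 ≤ s) (ht1 : 1 ≤ t) (hs2 : s + 2 ≤ L)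
    (ht2 : t + 2 ≤ L) (a z : Site L) (hz : z ∉ rect L a s t) {y y' : Site L}
    (hy : y ∈ rect L a s t) (hy' : y' ∈ rect L a s t)
    (hn : nbr L z y) (hn' : nbr L z y') : y = y' := by
  have hL : 2 ≤ L := by omega
  have hs : s ≤ L := by omega
  have ht : t ≤ L := by omega
  have A1 := val_add_one hL (z.1 - a.1)
  have S1 := val_sub_one hL (z.1 - a.1)
  have A2 := val_add_one hL (z.2 - a.2)
  have S2 := val_sub_one hL (z.2 - a.2)
  have hu := ZMod.val_lt (z.1 - a.1)
  have hv := ZMod.val_lt (z.2 - a.2)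
  rw [mem_rect hs ht] at hz
  unfold nbr at hn hn'
  rcases hn with rfl | rfl | rfl | rfl <;> rcases hn' with rfl | rfl | rfl | rfl <;>
    first
      | rfl
      | (exfalso;
         simp only [mem_rect_addx hs ht, mem_rect_subx hs ht, mem_rect_addy hs ht,
           mem_rect_suby hs ht] at hy hy';
         omega)

end BC
namespace BC
variable {L : ℕ} [NeZero L]

lemma card_site : Fintype.card (Site L) = L^2 := by
  simp only [Fintype.card_prod, ZMod.card]; ring

lemma sum_sval {s t : ℕ} (hs2 : s + 2 ≤ L) (ht2 : t + 2 ≤ L) (a z : Site L) (σ : Cfg L)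
    (hz : z ∉ rect L a s t) (hS : ∀ x ∈ rect L a s t, σ x = 1)
    (hout : ∀ x, x ∉ rect L a s t → x ≠ z → σ x = 0) :
    ∑ x : Site L, ((sval (σ x) : ℝ)) =
      (sval (σ z) : ℝ) + (s * t : ℝ) + 1 - (L : ℝ)^2 := by
  classical
  have hs : s ≤ L := by omega
  have ht : t ≤ L := by omega
  have hstL : s * t + 1 ≤ L^2 := by nlinarith
  set T : Finset (Site L) := insert z (rect L a s t) with hT
  have hTcard : T.card = s * t + 1 := by
    rw [hT, Finset.card_insert_of_notMem hz, card_rect hs ht]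
  have h1 : ∑ x ∈ T, ((sval (σ x) : ℝ)) = (sval (σ z) : ℝ) := by
    rw [hT, Finset.sum_insert hz]
    have hc : ∀ x ∈ rect L a s t, ((sval (σ x) : ℝ)) = 0 := fun x hx => by
      rw [hS x hx]; simp [sval]
    rw [Finset.sum_congr rfl hc, Finset.sum_const, smul_zero, add_zero]
  have h2 : ∑ x ∈ Tᶜ, ((sval (σ x) : ℝ)) = -((L : ℝ)^2 - (s * t + 1)) := by
    have hc : ∀ x ∈ Tᶜ, ((sval (σ x) : ℝ)) = -1 := by
      intro x hx
      rw [Finset.mem_compl, hT, Finset.mem_insert] at hx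
      push_neg at hx
      rw [hout x hx.2 hx.1]; simp [sval]
    rw [Finset.sum_congr rfl hc, Finset.sum_const, Finset.card_compl, hTcard, card_site,
      nsmul_eq_mul, Nat.cast_sub hstL]
    push_cast; ring
  rw [← Finset.sum_add_sum_compl T, h1, h2]
  push_cast; ring

end BC
namespace BC
variable {L : ℕ} [NeZero L]

lemma val_neg_one (hL : 2 ≤ L) : ((-1 : ZMod L)).val = L - 1 := by
  rcases val_sub_one hL (0 : ZMod L) with h | h
  · exact absurd (ZMod.val_zero (n := L)) h.1
  · rw [← zero_sub]; exact h.2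

lemma one_ne_zero' (hL : 2 ≤ L) : (1 : ZMod L) ≠ 0 := by
  intro h
  have := congrArg ZMod.val h
  rw [ZMod.val_one_eq_one_mod, Nat.mod_eq_of_lt hL, ZMod.val_zero] at this
  omega

lemma cast_inj_range {m : ℕ} (hm : m ≤ L) {i j : ℕ} (hi : i < m) (hj : j < m)
    (h : ((i : ZMod L)) = j) : i = j := by
  have := congrArg ZMod.val h
  rwa [ZMod.val_cast_of_lt (by omega), ZMod.val_cast_of_lt (by omega)] at this

lemma grad_lb {s t : ℕ} (hs1 : 1 ≤ s) (ht1 : 1 ≤ t) (hs2 : s + 2 ≤ L) (ht2 : t + 2 ≤ L)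
    (a z : Site L) (σ : Cfg L) (hz : z ∉ rect L a s t)
    (hS : ∀ x ∈ rect L a s t, σ x = 1)
    (hout : ∀ x, x ∉ rect L a s t → x ≠ z → σ x = 0)
    (hAlt : σ z = 2 ∨ ∀ y ∈ rect L a s t, ¬ nbr L z y) :
    2 * ((s : ℝ) + t) +
      (if ∀ y ∈ rect L a s t, ¬ nbr L z y then (4 : ℝ) else 3) *
        ((sval (σ z) : ℝ) + 1)^2 ≤
    ∑ x : Site L, (((sval (σ (x + (1, 0))) : ℝ) - (sval (σ x) : ℝ)) ^ 2 +
      ((sval (σ (x + (0, 1))) : ℝ) - (sval (σ x) : ℝ)) ^ 2) := by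
  classical
  have hL : 2 ≤ L := by omega
  have hs : s ≤ L := by omega
  have ht : t ≤ L := by omega
  have hneg1 : ((-1 : ZMod L)).val = L - 1 := val_neg_one hL
  have h10 : (1 : ZMod L) ≠ 0 := one_ne_zero' hL
  set t1 : Site L → ℝ := fun x => ((sval (σ (x + (1, 0))) : ℝ) - (sval (σ x) : ℝ)) ^ 2
    with ht1def
  set t2 : Site L → ℝ := fun x => ((sval (σ (x + (0, 1))) : ℝ) - (sval (σ x) : ℝ)) ^ 2
    with ht2def
  have ht1nn : ∀ x, 0 ≤ t1 x := fun x => sq_nonneg _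
  have ht2nn : ∀ x, 0 ≤ t2 x := fun x => sq_nonneg _
  -- the four sides
  set FLs : Finset (Site L) :=
    (Finset.range t).image (fun (j : ℕ) => (a.1 - 1, a.2 + (j : ZMod L))) with hFLdef
  set FRs : Finset (Site L) :=
    (Finset.range t).image (fun (j : ℕ) => (a.1 + ((s - 1 : ℕ) : ZMod L), a.2 + (j : ZMod L)))
    with hFRdef
  set FBs : Finset (Site L) :=
    (Finset.range s).image (fun (i : ℕ) => (a.1 + (i : ZMod L), a.2 - 1)) with hFBdef
  set FTs : Finset (Site L) :=
    (Finset.range s).image (fun (i : ℕ) => (a.1 + (i : ZMod L), a.2 + ((t - 1 : ℕ) : ZMod L)))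
    with hFTdef
  set Z1 : Finset (Site L) :=
    ({z, z - ((1 : ZMod L), (0 : ZMod L))} : Finset (Site L)).filter
      (fun x => x ∉ rect L a s t ∧ x + ((1 : ZMod L), (0 : ZMod L)) ∉ rect L a s t)
    with hZ1def
  set Z2 : Finset (Site L) :=
    ({z, z - ((0 : ZMod L), (1 : ZMod L))} : Finset (Site L)).filter
      (fun x => x ∉ rect L a s t ∧ x + ((0 : ZMod L), (1 : ZMod L)) ∉ rect L a s t)
    with hZ2def
  have hsv : ∀ x, x ∉ rect L a s t → x ≠ z → (sval (σ x) : ℝ) = -1 := by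
    intro x h1 h2; rw [hout x h1 h2]; norm_num [sval]
  have hsv1 : ∀ x ∈ rect L a s t, (sval (σ x) : ℝ) = 0 := by
    intro x h1; rw [hS x h1]; norm_num [sval]
  -- FL facts
  have hFL : ∀ x ∈ FLs, (x ∉ rect L a s t ∧ x + ((1 : ZMod L), (0 : ZMod L)) ∈ rect L a s t)
      ∧ 1 ≤ t1 x := by
    intro x hx
    rw [hFLdef, Finset.mem_image] at hx
    obtain ⟨j, hj, rfl⟩ := hx
    rw [Finset.mem_range] at hj
    have hx1 : ((a.1 - 1 : ZMod L) - a.1) = -1 := by ring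
    have hx2 : ((a.2 + (j : ZMod L)) - a.2) = (j : ZMod L) := by ring
    have hnotmem : ((a.1 - 1, a.2 + (j : ZMod L)) : Site L) ∉ rect L a s t := by
      intro hmem
      rw [mem_rect hs ht] at hmem
      rw [hx1, hneg1] at hmem
      omega
    have hmem2 : ((a.1 - 1, a.2 + (j : ZMod L)) : Site L) + ((1 : ZMod L), (0 : ZMod L)) ∈
        rect L a s t := by
      rw [mem_rect_addx hs ht]
      constructor
      · rw [show ((a.1 - 1, a.2 + (j : ZMod L)) : Site L).1 - a.1 + 1 = 0 by show a.1 - 1 - a.1 + 1 = 0; ring]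
        rw [ZMod.val_zero]; omega
      · rw [show ((a.1 - 1, a.2 + (j : ZMod L)) : Site L).2 - a.2 = (j : ZMod L) from hx2]
        rw [ZMod.val_cast_of_lt (by omega)]; omega
    refine ⟨⟨hnotmem, hmem2⟩, ?_⟩
    rw [ht1def]
    simp only
    rw [hsv1 _ hmem2]
    by_cases hxz : ((a.1 - 1, a.2 + (j : ZMod L)) : Site L) = z
    · rcases hAlt with h2 | hna
      · rw [hxz, h2]; norm_num [sval]
      · exfalso
        refine hna _ hmem2 ?_
        left; rw [hxz]
    · rw [hsv _ hnotmem hxz]; norm_num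
  -- FR facts
  have hFR : ∀ x ∈ FRs, (x ∈ rect L a s t ∧ x + ((1 : ZMod L), (0 : ZMod L)) ∉ rect L a s t)
      ∧ 1 ≤ t1 x := by
    intro x hx
    rw [hFRdef, Finset.mem_image] at hx
    obtain ⟨j, hj, rfl⟩ := hx
    rw [Finset.mem_range] at hj
    have hmem : ((a.1 + ((s - 1 : ℕ) : ZMod L), a.2 + (j : ZMod L)) : Site L) ∈
        rect L a s t := by
      rw [mem_rect hs ht]
      constructor
      · rw [show (a.1 + ((s - 1 : ℕ) : ZMod L)) - a.1 = ((s - 1 : ℕ) : ZMod L) by ring,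
          ZMod.val_cast_of_lt (by omega)]
        omega
      · rw [show (a.2 + (j : ZMod L)) - a.2 = (j : ZMod L) by ring,
          ZMod.val_cast_of_lt (by omega)]
        omega
    have hnot : ((a.1 + ((s - 1 : ℕ) : ZMod L), a.2 + (j : ZMod L)) : Site L) +
        ((1 : ZMod L), (0 : ZMod L)) ∉ rect L a s t := by
      rw [mem_rect_addx hs ht]
      rintro ⟨h1, -⟩
      rw [show ((a.1 + ((s - 1 : ℕ) : ZMod L), a.2 + (j : ZMod L)) : Site L).1 - a.1 + 1
          = ((s : ℕ) : ZMod L) by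
        show a.1 + ((s - 1 : ℕ) : ZMod L) - a.1 + 1 = ((s : ℕ) : ZMod L)
        rw [show ((s : ℕ) : ZMod L) = (((s - 1) + 1 : ℕ) : ZMod L) by rw [Nat.sub_add_cancel hs1]]
        push_cast
        ring] at h1
      rw [ZMod.val_cast_of_lt (by omega)] at h1
      omega
    refine ⟨⟨hmem, hnot⟩, ?_⟩
    rw [ht1def]
    simp only
    rw [hsv1 _ hmem]
    set x := ((a.1 + ((s - 1 : ℕ) : ZMod L), a.2 + (j : ZMod L)) : Site L) with hxdef
    by_cases hxz : x + ((1 : ZMod L), (0 : ZMod L)) = z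
    · rcases hAlt with h2 | hna
      · rw [hxz, h2]; norm_num [sval]
      · exfalso
        refine hna x hmem ?_
        right; left
        rw [← hxz]
        show x = x + (1, 0) - (1, 0)
        ring
    · rw [hsv _ hnot hxz]; norm_num
  -- FB facts
  have hFB : ∀ x ∈ FBs, (x ∉ rect L a s t ∧ x + ((0 : ZMod L), (1 : ZMod L)) ∈ rect L a s t)
      ∧ 1 ≤ t2 x := by
    intro x hx
    rw [hFBdef, Finset.mem_image] at hx
    obtain ⟨i, hi, rfl⟩ := hx
    rw [Finset.mem_range] at hi
    have hnotmem : ((a.1 + (i : ZMod L), a.2 - 1) : Site L) ∉ rect L a s t := by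
      intro hmem
      rw [mem_rect hs ht] at hmem
      rw [show (a.2 - 1 : ZMod L) - a.2 = -1 by ring, hneg1] at hmem
      omega
    have hmem2 : ((a.1 + (i : ZMod L), a.2 - 1) : Site L) + ((0 : ZMod L), (1 : ZMod L)) ∈
        rect L a s t := by
      rw [mem_rect_addy hs ht]
      constructor
      · rw [show ((a.1 + (i : ZMod L), a.2 - 1) : Site L).1 - a.1 = (i : ZMod L) by
          show a.1 + (i : ZMod L) - a.1 = _; ring]
        rw [ZMod.val_cast_of_lt (by omega)]; omega
      · rw [show ((a.1 + (i : ZMod L), a.2 - 1) : Site L).2 - a.2 + 1 = 0 by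
          show a.2 - 1 - a.2 + 1 = 0; ring]
        rw [ZMod.val_zero]; omega
    refine ⟨⟨hnotmem, hmem2⟩, ?_⟩
    rw [ht2def]
    simp only
    rw [hsv1 _ hmem2]
    by_cases hxz : ((a.1 + (i : ZMod L), a.2 - 1) : Site L) = z
    · rcases hAlt with h2 | hna
      · rw [hxz, h2]; norm_num [sval]
      · exfalso
        refine hna _ hmem2 ?_
        right; right; left; rw [hxz]
    · rw [hsv _ hnotmem hxz]; norm_num
  -- FT facts
  have hFT : ∀ x ∈ FTs, (x ∈ rect L a s t ∧ x + ((0 : ZMod L), (1 : ZMod L)) ∉ rect L a s t)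
      ∧ 1 ≤ t2 x := by
    intro x hx
    rw [hFTdef, Finset.mem_image] at hx
    obtain ⟨i, hi, rfl⟩ := hx
    rw [Finset.mem_range] at hi
    have hmem : ((a.1 + (i : ZMod L), a.2 + ((t - 1 : ℕ) : ZMod L)) : Site L) ∈
        rect L a s t := by
      rw [mem_rect hs ht]
      constructor
      · rw [show (a.1 + (i : ZMod L)) - a.1 = (i : ZMod L) by ring,
          ZMod.val_cast_of_lt (by omega)]
        omega
      · rw [show (a.2 + ((t - 1 : ℕ) : ZMod L)) - a.2 = ((t - 1 : ℕ) : ZMod L) by ring,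
          ZMod.val_cast_of_lt (by omega)]
        omega
    have hnot : ((a.1 + (i : ZMod L), a.2 + ((t - 1 : ℕ) : ZMod L)) : Site L) +
        ((0 : ZMod L), (1 : ZMod L)) ∉ rect L a s t := by
      rw [mem_rect_addy hs ht]
      rintro ⟨-, h1⟩
      rw [show ((a.1 + (i : ZMod L), a.2 + ((t - 1 : ℕ) : ZMod L)) : Site L).2 - a.2 + 1
          = ((t : ℕ) : ZMod L) by
        show a.2 + ((t - 1 : ℕ) : ZMod L) - a.2 + 1 = ((t : ℕ) : ZMod L)
        rw [show ((t : ℕ) : ZMod L) = (((t - 1) + 1 : ℕ) : ZMod L) by rw [Nat.sub_add_cancel ht1]]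
        push_cast
        ring] at h1
      rw [ZMod.val_cast_of_lt (by omega)] at h1
      omega
    refine ⟨⟨hmem, hnot⟩, ?_⟩
    rw [ht2def]
    simp only
    rw [hsv1 _ hmem]
    set x := ((a.1 + (i : ZMod L), a.2 + ((t - 1 : ℕ) : ZMod L)) : Site L) with hxdef
    by_cases hxz : x + ((0 : ZMod L), (1 : ZMod L)) = z
    · rcases hAlt with h2 | hna
      · rw [hxz, h2]; norm_num [sval]
      · exfalso
        refine hna x hmem ?_
        right; right; right
        rw [← hxz]
        show x = x + (0, 1) - (0, 1)
        ring
    · rw [hsv _ hnot hxz]; norm_num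
  -- scalar distinctness helpers
  have hw1 : ∀ w : ZMod L, w + 1 ≠ w := fun w h => h10 (by linear_combination h)
  have hw2 : ∀ w : ZMod L, w - 1 ≠ w := fun w h => h10 (by linear_combination -h)
  have hw3 : ∀ w : ZMod L, w + 1 ≠ w - 1 := by
    intro w h
    have h2 : ((2 : ℕ) : ZMod L) = 0 := by push_cast; linear_combination h
    have := congrArg ZMod.val h2
    rw [ZMod.val_cast_of_lt (by omega), ZMod.val_zero] at this
    omega
  have hzz1 : z - ((1 : ZMod L), (0 : ZMod L)) ≠ z := fun h => hw2 z.1 (congrArg Prod.fst h)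
  have hzz2 : z - ((0 : ZMod L), (1 : ZMod L)) ≠ z := fun h => hw2 z.2 (congrArg Prod.snd h)
  -- values on Z1, Z2
  have hZ1v : ∀ x ∈ Z1, ((sval (σ z) : ℝ) + 1)^2 ≤ t1 x := by
    intro x hx
    rw [hZ1def, Finset.mem_filter, Finset.mem_insert, Finset.mem_singleton] at hx
    obtain ⟨hx01, hx1, hx2⟩ := hx
    rcases hx01 with rfl | rfl
    · have hne : x + ((1 : ZMod L), (0 : ZMod L)) ≠ x := fun h => hw1 x.1 (congrArg Prod.fst h)
      rw [ht1def]; simp only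
      rw [hsv _ hx2 hne]
      ring_nf
      exact le_of_eq (by ring)
    · have heq : (z - ((1 : ZMod L), (0 : ZMod L))) + ((1 : ZMod L), (0 : ZMod L)) = z := by ring
      rw [ht1def]; simp only
      rw [heq, hsv _ hx1 hzz1]
      exact le_of_eq (by ring)
  have hZ2v : ∀ x ∈ Z2, ((sval (σ z) : ℝ) + 1)^2 ≤ t2 x := by
    intro x hx
    rw [hZ2def, Finset.mem_filter, Finset.mem_insert, Finset.mem_singleton] at hx
    obtain ⟨hx01, hx1, hx2⟩ := hx
    rcases hx01 with rfl | rfl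
    · have hne : x + ((0 : ZMod L), (1 : ZMod L)) ≠ x := fun h => hw1 x.2 (congrArg Prod.snd h)
      rw [ht2def]; simp only
      rw [hsv _ hx2 hne]
      exact le_of_eq (by ring)
    · have heq : (z - ((0 : ZMod L), (1 : ZMod L))) + ((0 : ZMod L), (1 : ZMod L)) = z := by ring
      rw [ht2def]; simp only
      rw [heq, hsv _ hx1 hzz2]
      exact le_of_eq (by ring)
  -- cards of the sides
  have hinj2 : ∀ (c : ZMod L) (m : ℕ), m ≤ L → ∀ (f : ZMod L → Site L),
      (∀ w, (f w).2 = c + w) → Set.InjOn (fun (j : ℕ) => f (j : ZMod L)) ↑(Finset.range m) := by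
    intro c m hm f hf j hj j' hj' he
    rw [Finset.mem_coe, Finset.mem_range] at hj hj'
    have := congrArg Prod.snd he
    rw [hf, hf] at this
    exact cast_inj_range hm hj hj' (add_left_cancel this)
  have hinj1 : ∀ (c : ZMod L) (m : ℕ), m ≤ L → ∀ (f : ZMod L → Site L),
      (∀ w, (f w).1 = c + w) → Set.InjOn (fun (j : ℕ) => f (j : ZMod L)) ↑(Finset.range m) := by
    intro c m hm f hf j hj j' hj' he
    rw [Finset.mem_coe, Finset.mem_range] at hj hj'
    have := congrArg Prod.fst he
    rw [hf, hf] at this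
    exact cast_inj_range hm hj hj' (add_left_cancel this)
  have hcFL : FLs.card = t := by
    rw [hFLdef, Finset.card_image_of_injOn
      (hinj2 a.2 t ht (fun w => (a.1 - 1, a.2 + w)) (fun w => rfl)), Finset.card_range]
  have hcFR : FRs.card = t := by
    rw [hFRdef, Finset.card_image_of_injOn
      (hinj2 a.2 t ht (fun w => (a.1 + ((s - 1 : ℕ) : ZMod L), a.2 + w)) (fun w => rfl)),
      Finset.card_range]
  have hcFB : FBs.card = s := by
    rw [hFBdef, Finset.card_image_of_injOn
      (hinj1 a.1 s hs (fun w => (a.1 + w, a.2 - 1)) (fun w => rfl)), Finset.card_range]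
  have hcFT : FTs.card = s := by
    rw [hFTdef, Finset.card_image_of_injOn
      (hinj1 a.1 s hs (fun w => (a.1 + w, a.2 + ((t - 1 : ℕ) : ZMod L))) (fun w => rfl)),
      Finset.card_range]
  -- card bounds for Z1 ∪ Z2
  have hc2 : ({z, z - ((1 : ZMod L), (0 : ZMod L))} : Finset (Site L)).card = 2 := by
    rw [Finset.card_insert_of_notMem (by simp [Ne.symm hzz1]), Finset.card_singleton]
  have hc2' : ({z, z - ((0 : ZMod L), (1 : ZMod L))} : Finset (Site L)).card = 2 := by
    rw [Finset.card_insert_of_notMem (by simp [Ne.symm hzz2]), Finset.card_singleton]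
  -- at-most-one-neighbor bookkeeping
  have hK : ∀ y y', y ∈ rect L a s t → y' ∈ rect L a s t → nbr L z y → nbr L z y' →
      y = y' := fun y y' h1 h2 h3 h4 => rect_nbr_unique hs1 ht1 hs2 ht2 a z hz h1 h2 h3 h4
  have hd12 : z + ((1 : ZMod L), (0 : ZMod L)) ≠ z - ((1 : ZMod L), (0 : ZMod L)) :=
    fun h => hw3 z.1 (congrArg Prod.fst h)
  have hd34 : z + ((0 : ZMod L), (1 : ZMod L)) ≠ z - ((0 : ZMod L), (1 : ZMod L)) :=
    fun h => hw3 z.2 (congrArg Prod.snd h)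
  have hd13 : z + ((1 : ZMod L), (0 : ZMod L)) ≠ z + ((0 : ZMod L), (1 : ZMod L)) :=
    fun h => hw1 z.1 (by have h2 : z.1 + 1 = z.1 + 0 := congrArg Prod.fst h; rwa [add_zero] at h2)
  have hd14 : z + ((1 : ZMod L), (0 : ZMod L)) ≠ z - ((0 : ZMod L), (1 : ZMod L)) :=
    fun h => hw1 z.1 (by have h2 : z.1 + 1 = z.1 - 0 := congrArg Prod.fst h; rwa [sub_zero] at h2)
  have hd23 : z - ((1 : ZMod L), (0 : ZMod L)) ≠ z + ((0 : ZMod L), (1 : ZMod L)) :=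
    fun h => hw2 z.1 (by have h2 : z.1 - 1 = z.1 + 0 := congrArg Prod.fst h; rwa [add_zero] at h2)
  have hd24 : z - ((1 : ZMod L), (0 : ZMod L)) ≠ z - ((0 : ZMod L), (1 : ZMod L)) :=
    fun h => hw2 z.1 (by have h2 : z.1 - 1 = z.1 - 0 := congrArg Prod.fst h; rwa [sub_zero] at h2)
  have hZc : (if ∀ y ∈ rect L a s t, ¬ nbr L z y then (4 : ℕ) else 3) ≤
      Z1.card + Z2.card := by
    by_cases hna : ∀ y ∈ rect L a s t, ¬ nbr L z y
    · rw [if_pos hna]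
      have e1 : Z1 = {z, z - ((1 : ZMod L), (0 : ZMod L))} := by
        rw [hZ1def]
        apply Finset.filter_true_of_mem
        intro x hx
        rw [Finset.mem_insert, Finset.mem_singleton] at hx
        rcases hx with rfl | rfl
        · exact ⟨hz, fun hm => hna _ hm (Or.inl rfl)⟩
        · refine ⟨fun hm => hna _ hm (Or.inr (Or.inl rfl)), ?_⟩
          rw [sub_add_cancel]; exact hz
      have e2 : Z2 = {z, z - ((0 : ZMod L), (1 : ZMod L))} := by
        rw [hZ2def]
        apply Finset.filter_true_of_mem
        intro x hx
        rw [Finset.mem_insert, Finset.mem_singleton] at hx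
        rcases hx with rfl | rfl
        · exact ⟨hz, fun hm => hna _ hm (Or.inr (Or.inr (Or.inl rfl)))⟩
        · refine ⟨fun hm => hna _ hm (Or.inr (Or.inr (Or.inr rfl))), ?_⟩
          rw [sub_add_cancel]; exact hz
      rw [e1, e2, hc2, hc2']
    · rw [if_neg hna]
      push_neg at hna
      obtain ⟨y, hy, hnb⟩ := hna
      rcases hnb with rfl | rfl | rfl | rfl
      · -- z + e1 ∈ rect
        have m2 : z - ((1 : ZMod L), (0 : ZMod L)) ∉ rect L a s t :=
          fun hm => hd12 (hK _ _ hy hm (Or.inl rfl) (Or.inr (Or.inl rfl)))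
        have m3 : z + ((0 : ZMod L), (1 : ZMod L)) ∉ rect L a s t :=
          fun hm => hd13 (hK _ _ hy hm (Or.inl rfl) (Or.inr (Or.inr (Or.inl rfl))))
        have m4 : z - ((0 : ZMod L), (1 : ZMod L)) ∉ rect L a s t :=
          fun hm => hd14 (hK _ _ hy hm (Or.inl rfl) (Or.inr (Or.inr (Or.inr rfl))))
        have hZ1c : 1 ≤ Z1.card := by
          refine Finset.card_pos.mpr ⟨z - ((1 : ZMod L), (0 : ZMod L)), ?_⟩
          rw [hZ1def, Finset.mem_filter]
          exact ⟨by simp, m2, by rw [sub_add_cancel]; exact hz⟩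
        have hZ2c : 2 ≤ Z2.card := by
          have hsub : ({z, z - ((0 : ZMod L), (1 : ZMod L))} : Finset (Site L)) ⊆ Z2 := by
            intro w hw
            rw [Finset.mem_insert, Finset.mem_singleton] at hw
            rw [hZ2def, Finset.mem_filter]
            rcases hw with rfl | rfl
            · exact ⟨by simp, hz, m3⟩
            · exact ⟨by simp, m4, by rw [sub_add_cancel]; exact hz⟩
          have := Finset.card_le_card hsub
          omega
        omega
      · -- z - e1 ∈ rect
        have m1 : z + ((1 : ZMod L), (0 : ZMod L)) ∉ rect L a s t :=
          fun hm => hd12 (hK _ _ hm hy (Or.inl rfl) (Or.inr (Or.inl rfl)))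
        have m3 : z + ((0 : ZMod L), (1 : ZMod L)) ∉ rect L a s t :=
          fun hm => hd23 (hK _ _ hy hm (Or.inr (Or.inl rfl)) (Or.inr (Or.inr (Or.inl rfl))))
        have m4 : z - ((0 : ZMod L), (1 : ZMod L)) ∉ rect L a s t :=
          fun hm => hd24 (hK _ _ hy hm (Or.inr (Or.inl rfl)) (Or.inr (Or.inr (Or.inr rfl))))
        have hZ1c : 1 ≤ Z1.card := by
          refine Finset.card_pos.mpr ⟨z, ?_⟩
          rw [hZ1def, Finset.mem_filter]
          exact ⟨by simp, hz, m1⟩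
        have hZ2c : 2 ≤ Z2.card := by
          have hsub : ({z, z - ((0 : ZMod L), (1 : ZMod L))} : Finset (Site L)) ⊆ Z2 := by
            intro w hw
            rw [Finset.mem_insert, Finset.mem_singleton] at hw
            rw [hZ2def, Finset.mem_filter]
            rcases hw with rfl | rfl
            · exact ⟨by simp, hz, m3⟩
            · exact ⟨by simp, m4, by rw [sub_add_cancel]; exact hz⟩
          have := Finset.card_le_card hsub
          omega
        omega
      · -- z + e2 ∈ rect
        have m1 : z + ((1 : ZMod L), (0 : ZMod L)) ∉ rect L a s t :=
          fun hm => hd13 (hK _ _ hm hy (Or.inl rfl) (Or.inr (Or.inr (Or.inl rfl))))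
        have m2 : z - ((1 : ZMod L), (0 : ZMod L)) ∉ rect L a s t :=
          fun hm => hd23 (hK _ _ hm hy (Or.inr (Or.inl rfl)) (Or.inr (Or.inr (Or.inl rfl))))
        have m4 : z - ((0 : ZMod L), (1 : ZMod L)) ∉ rect L a s t :=
          fun hm => hd34 (hK _ _ hy hm (Or.inr (Or.inr (Or.inl rfl))) (Or.inr (Or.inr (Or.inr rfl))))
        have hZ1c : 2 ≤ Z1.card := by
          have hsub : ({z, z - ((1 : ZMod L), (0 : ZMod L))} : Finset (Site L)) ⊆ Z1 := by
            intro w hw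
            rw [Finset.mem_insert, Finset.mem_singleton] at hw
            rw [hZ1def, Finset.mem_filter]
            rcases hw with rfl | rfl
            · exact ⟨by simp, hz, m1⟩
            · exact ⟨by simp, m2, by rw [sub_add_cancel]; exact hz⟩
          have := Finset.card_le_card hsub
          omega
        have hZ2c : 1 ≤ Z2.card := by
          refine Finset.card_pos.mpr ⟨z - ((0 : ZMod L), (1 : ZMod L)), ?_⟩
          rw [hZ2def, Finset.mem_filter]
          exact ⟨by simp, m4, by rw [sub_add_cancel]; exact hz⟩
        omega
      · -- z - e2 ∈ rect
        have m1 : z + ((1 : ZMod L), (0 : ZMod L)) ∉ rect L a s t :=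
          fun hm => hd14 (hK _ _ hm hy (Or.inl rfl) (Or.inr (Or.inr (Or.inr rfl))))
        have m2 : z - ((1 : ZMod L), (0 : ZMod L)) ∉ rect L a s t :=
          fun hm => hd24 (hK _ _ hm hy (Or.inr (Or.inl rfl)) (Or.inr (Or.inr (Or.inr rfl))))
        have m3 : z + ((0 : ZMod L), (1 : ZMod L)) ∉ rect L a s t :=
          fun hm => hd34 (hK _ _ hm hy (Or.inr (Or.inr (Or.inl rfl))) (Or.inr (Or.inr (Or.inr rfl))))
        have hZ1c : 2 ≤ Z1.card := by
          have hsub : ({z, z - ((1 : ZMod L), (0 : ZMod L))} : Finset (Site L)) ⊆ Z1 := by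
            intro w hw
            rw [Finset.mem_insert, Finset.mem_singleton] at hw
            rw [hZ1def, Finset.mem_filter]
            rcases hw with rfl | rfl
            · exact ⟨by simp, hz, m1⟩
            · exact ⟨by simp, m2, by rw [sub_add_cancel]; exact hz⟩
          have := Finset.card_le_card hsub
          omega
        have hZ2c : 1 ≤ Z2.card := by
          refine Finset.card_pos.mpr ⟨z, ?_⟩
          rw [hZ2def, Finset.mem_filter]
          exact ⟨by simp, hz, m3⟩
        omega
  -- disjointness
  have hdLR : Disjoint FLs FRs := by
    rw [Finset.disjoint_left]
    intro x hxL hxR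
    exact (hFL x hxL).1.1 (hFR x hxR).1.1
  have hdLRZ : Disjoint (FLs ∪ FRs) Z1 := by
    rw [Finset.disjoint_left]
    intro x hx hxZ
    have hxZ' := (Finset.mem_filter.mp (hZ1def ▸ hxZ)).2
    rcases Finset.mem_union.mp hx with hmem | hmem
    · exact hxZ'.2 (hFL x hmem).1.2
    · exact hxZ'.1 (hFR x hmem).1.1
  have hdBT : Disjoint FBs FTs := by
    rw [Finset.disjoint_left]
    intro x hxL hxR
    exact (hFB x hxL).1.1 (hFT x hxR).1.1
  have hdBTZ : Disjoint (FBs ∪ FTs) Z2 := by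
    rw [Finset.disjoint_left]
    intro x hx hxZ
    have hxZ' := (Finset.mem_filter.mp (hZ2def ▸ hxZ)).2
    rcases Finset.mem_union.mp hx with hmem | hmem
    · exact hxZ'.2 (hFB x hmem).1.2
    · exact hxZ'.1 (hFT x hmem).1.1
  have hw0 : (0 : ℝ) ≤ ((sval (σ z) : ℝ) + 1)^2 := sq_nonneg _
  have hS1 : ((t : ℝ) + t) + Z1.card * ((sval (σ z) : ℝ) + 1)^2 ≤ ∑ x : Site L, t1 x := by
    have hb1 : (t : ℝ) ≤ ∑ x ∈ FLs, t1 x := by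
      have := Finset.card_nsmul_le_sum FLs t1 1 (fun x hx => (hFL x hx).2)
      rwa [hcFL, nsmul_eq_mul, mul_one] at this
    have hb2 : (t : ℝ) ≤ ∑ x ∈ FRs, t1 x := by
      have := Finset.card_nsmul_le_sum FRs t1 1 (fun x hx => (hFR x hx).2)
      rwa [hcFR, nsmul_eq_mul, mul_one] at this
    have hb3 : (Z1.card : ℝ) * ((sval (σ z) : ℝ) + 1)^2 ≤ ∑ x ∈ Z1, t1 x := by
      have := Finset.card_nsmul_le_sum Z1 t1 _ hZ1v
      rwa [nsmul_eq_mul] at this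
    have hsub : ∑ x ∈ (FLs ∪ FRs) ∪ Z1, t1 x ≤ ∑ x : Site L, t1 x :=
      Finset.sum_le_sum_of_subset_of_nonneg (Finset.subset_univ _) (fun i _ _ => ht1nn i)
    rw [Finset.sum_union hdLRZ, Finset.sum_union hdLR] at hsub
    linarith
  have hS2 : ((s : ℝ) + s) + Z2.card * ((sval (σ z) : ℝ) + 1)^2 ≤ ∑ x : Site L, t2 x := by
    have hb1 : (s : ℝ) ≤ ∑ x ∈ FBs, t2 x := by
      have := Finset.card_nsmul_le_sum FBs t2 1 (fun x hx => (hFB x hx).2)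
      rwa [hcFB, nsmul_eq_mul, mul_one] at this
    have hb2 : (s : ℝ) ≤ ∑ x ∈ FTs, t2 x := by
      have := Finset.card_nsmul_le_sum FTs t2 1 (fun x hx => (hFT x hx).2)
      rwa [hcFT, nsmul_eq_mul, mul_one] at this
    have hb3 : (Z2.card : ℝ) * ((sval (σ z) : ℝ) + 1)^2 ≤ ∑ x ∈ Z2, t2 x := by
      have := Finset.card_nsmul_le_sum Z2 t2 _ hZ2v
      rwa [nsmul_eq_mul] at this
    have hsub : ∑ x ∈ (FBs ∪ FTs) ∪ Z2, t2 x ≤ ∑ x : Site L, t2 x :=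
      Finset.sum_le_sum_of_subset_of_nonneg (Finset.subset_univ _) (fun i _ _ => ht2nn i)
    rw [Finset.sum_union hdBTZ, Finset.sum_union hdBT] at hsub
    linarith
  have hctot : (if ∀ y ∈ rect L a s t, ¬ nbr L z y then (4 : ℝ) else 3) ≤
      ((Z1.card : ℝ) + (Z2.card : ℝ)) := by
    split_ifs at hZc ⊢ with hcond
    · exact_mod_cast hZc
    · exact_mod_cast hZc
  have hmul : (if ∀ y ∈ rect L a s t, ¬ nbr L z y then (4 : ℝ) else 3) *
      ((sval (σ z) : ℝ) + 1)^2 ≤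
      ((Z1.card : ℝ) + (Z2.card : ℝ)) * ((sval (σ z) : ℝ) + 1)^2 :=
    mul_le_mul_of_nonneg_right hctot hw0
  have hsplit : ∑ x : Site L, (((sval (σ (x + (1, 0))) : ℝ) - (sval (σ x) : ℝ)) ^ 2 +
      ((sval (σ (x + (0, 1))) : ℝ) - (sval (σ x) : ℝ)) ^ 2) =
      (∑ x : Site L, t1 x) + ∑ x : Site L, t2 x := by
    rw [← Finset.sum_add_distrib]
  rw [hsplit]
  nlinarith [hS1, hS2, hmul]

end BC
namespace BC
variable {L : ℕ} [NeZero L]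

lemma fin3_cases (v : Fin 3) (hv : v ≠ 0) : v = 1 ∨ v = 2 := by
  fin_cases v <;> simp_all

lemma setRplus_cases {n : ℕ} (σ : Cfg L) (hσ : σ ∈ setRplus L n) :
    ∃ (a z : Site L) (b : Bool),
      z ∉ rect L a (cond b n (n + 1)) (cond b (n + 1) n) ∧
      Asites L σ = insert z (rect L a (cond b n (n + 1)) (cond b (n + 1) n)) ∧
      ∀ x ∈ rect L a (cond b n (n + 1)) (cond b (n + 1) n), σ x = 1 := by
  obtain ⟨S, z, ⟨a, hor⟩, hznot, hA, hS⟩ := hσ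
  rcases hor with rfl | rfl
  · exact ⟨a, z, true, hznot, hA, hS⟩
  · exact ⟨a, z, false, hznot, hA, hS⟩

lemma asites_z {n : ℕ} (σ : Cfg L) (z : Site L) (R : Finset (Site L))
    (hA : Asites L σ = insert z R) : σ z = 1 ∨ σ z = 2 := by
  have hz : z ∈ Asites L σ := hA ▸ Finset.mem_insert_self z R
  rw [Asites, Finset.mem_filter] at hz
  exact fin3_cases _ hz.2

lemma asites_out (σ : Cfg L) (z : Site L) (R : Finset (Site L))
    (hA : Asites L σ = insert z R) :
    ∀ x, x ∉ R → x ≠ z → σ x = 0 := by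
  intro x h1 h2
  by_contra hc
  have hx : x ∈ Asites L σ := Finset.mem_filter.mpr ⟨Finset.mem_univ x, hc⟩
  rw [hA, Finset.mem_insert] at hx
  tauto

lemma nsz_of_asites {n : ℕ} (hL : 2 * (n + 2) ≤ L) (σ : Cfg L) (a z : Site L) (b : Bool)
    (hz : z ∉ rect L a (cond b n (n + 1)) (cond b (n + 1) n))
    (hA : Asites L σ = insert z (rect L a (cond b n (n + 1)) (cond b (n + 1) n))) :
    Nsz L σ = n * (n + 1) + 1 := by
  rw [Nsz, hA, Finset.card_insert_of_notMem hz]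
  cases b
  · simp only [Bool.cond_false]
    rw [card_rect (by omega) (by omega)]; ring
  · simp only [Bool.cond_true]
    rw [card_rect (by omega) (by omega)]

lemma nsz_valleyM {n : ℕ} (hL : 2 * (n + 2) ≤ L) (τ : Cfg L) (hτ : τ ∈ valleyM L n) :
    Nsz L τ ≤ n * (n + 1) + 1 := by
  rcases hτ with hτ | hτ
  · exact le_trans hτ (by omega)
  · obtain ⟨a, z, b, hz, hA, -⟩ := setRplus_cases τ hτ
    rw [nsz_of_asites hL τ a z b hz hA]

lemma tau_count {n : ℕ} (hL : 2 * (n + 2) ≤ L) (h β : ℝ) (σ : Cfg L)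
    (hσ : Nsz L σ = n * (n + 1) + 1) :
    ∑ τ : Cfg L, (if τ ∈ valleyM L n ∧ oneDiff L σ τ
        then min (gw L h β σ) (gw L h β τ) else 0) ≤
      3 * ((n * (n + 1) + 1 : ℕ) : ℝ) * gw L h β σ := by
  classical
  have hgw0 : 0 ≤ gw L h β σ := le_of_lt (Real.exp_pos _)
  have step1 : ∑ τ : Cfg L, (if τ ∈ valleyM L n ∧ oneDiff L σ τ
      then min (gw L h β σ) (gw L h β τ) else 0) ≤
      ∑ τ ∈ Finset.univ.filter (fun τ => τ ∈ valleyM L n ∧ oneDiff L σ τ),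
        gw L h β σ := by
    rw [Finset.sum_filter]
    apply Finset.sum_le_sum
    intro τ _
    split_ifs
    · exact min_le_left _ _
    · exact le_refl 0
  have step2 : (Finset.univ.filter (fun τ => τ ∈ valleyM L n ∧ oneDiff L σ τ)).card ≤
      3 * (n * (n + 1) + 1) := by
    have hsub : Finset.univ.filter (fun τ => τ ∈ valleyM L n ∧ oneDiff L σ τ) ⊆
        (Asites L σ ×ˢ (Finset.univ : Finset (Fin 3))).image
          (fun p => Function.update σ p.1 p.2) := by
      intro τ hτ
      rw [Finset.mem_filter] at hτ
      obtain ⟨-, hval, hone⟩ := hτ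
      rw [oneDiff] at hone
      obtain ⟨x, hx⟩ := Finset.card_eq_one.mp hone
      have hxd : σ x ≠ τ x := by
        have : x ∈ Finset.univ.filter (fun y => σ y ≠ τ y) := hx ▸ Finset.mem_singleton_self x
        exact (Finset.mem_filter.mp this).2
      have hupd : τ = Function.update σ x (τ x) := by
        funext y
        by_cases hy : y = x
        · subst hy; rw [Function.update_self]
        · rw [Function.update_of_ne hy]
          by_contra hne
          have : y ∈ Finset.univ.filter (fun w => σ w ≠ τ w) :=
            Finset.mem_filter.mpr ⟨Finset.mem_univ y, fun hh => hne hh.symm⟩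
          rw [hx, Finset.mem_singleton] at this
          exact hy this
      have hxA : x ∈ Asites L σ := by
        by_contra hxA
        have hσx : σ x = 0 := by
          rw [Asites, Finset.mem_filter] at hxA
          push_neg at hxA
          exact hxA (Finset.mem_univ x)
        have hsubA : insert x (Asites L σ) ⊆ Asites L τ := by
          intro y hy
          rw [Finset.mem_insert] at hy
          rw [Asites, Finset.mem_filter]
          refine ⟨Finset.mem_univ y, ?_⟩
          rcases hy with rfl | hy
          · rw [hupd, Function.update_self]
            intro hc; exact hxd (by rw [hσx, hc])
          · rw [Asites, Finset.mem_filter] at hy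
            by_cases hyx : y = x
            · subst hyx; exact absurd hσx hy.2
            · rw [hupd, Function.update_of_ne hyx]; exact hy.2
        have hcard := Finset.card_le_card hsubA
        rw [Finset.card_insert_of_notMem hxA] at hcard
        have h1 := nsz_valleyM hL τ hval
        rw [Nsz] at *
        omega
      rw [Finset.mem_image]
      exact ⟨(x, τ x), Finset.mem_product.mpr ⟨hxA, Finset.mem_univ _⟩, hupd.symm⟩
    calc (Finset.univ.filter (fun τ => τ ∈ valleyM L n ∧ oneDiff L σ τ)).card
        ≤ ((Asites L σ ×ˢ (Finset.univ : Finset (Fin 3))).image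
            (fun p => Function.update σ p.1 p.2)).card := Finset.card_le_card hsub
      _ ≤ (Asites L σ ×ˢ (Finset.univ : Finset (Fin 3))).card := Finset.card_image_le
      _ = (n * (n + 1) + 1) * 3 := by
          rw [Finset.card_product, ← Nsz, hσ]; simp [Fintype.card_fin]
      _ = 3 * (n * (n + 1) + 1) := by ring
  calc ∑ τ : Cfg L, (if τ ∈ valleyM L n ∧ oneDiff L σ τ
        then min (gw L h β σ) (gw L h β τ) else 0)
      ≤ ∑ τ ∈ Finset.univ.filter (fun τ => τ ∈ valleyM L n ∧ oneDiff L σ τ),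
          gw L h β σ := step1
    _ = (Finset.univ.filter (fun τ => τ ∈ valleyM L n ∧ oneDiff L σ τ)).card *
          gw L h β σ := by rw [Finset.sum_const, nsmul_eq_mul]
    _ ≤ 3 * ((n * (n + 1) + 1 : ℕ) : ℝ) * gw L h β σ := by
        apply mul_le_mul_of_nonneg_right _ hgw0
        exact_mod_cast step2

end BC
namespace BC
variable {L : ℕ} [NeZero L]

lemma ham_lb {s t : ℕ} {h : ℝ} (h0 : 0 < h) (h2 : h < 2) (hs1 : 1 ≤ s) (ht1 : 1 ≤ t)
    (hs2 : s + 2 ≤ L) (ht2 : t + 2 ≤ L) (a z : Site L) (σ : Cfg L)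
    (hz : z ∉ rect L a s t) (hS : ∀ x ∈ rect L a s t, σ x = 1)
    (hzv : σ z = 1 ∨ σ z = 2)
    (hout : ∀ x, x ∉ rect L a s t → x ≠ z → σ x = 0)
    (hAlt : σ z = 2 ∨ ∀ y ∈ rect L a s t, ¬ nbr L z y) :
    (if ∀ y ∈ rect L a s t, ¬ nbr L z y then 2 * ((s : ℝ) + t) + 4
      else 2 * ((s : ℝ) + t) + 12 - h) + h * ((L : ℝ)^2 - (s : ℝ) * t - 1) ≤
    ham L h σ := by
  have hg := grad_lb hs1 ht1 hs2 ht2 a z σ hz hS hout hAlt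
  have hm := sum_sval hs2 ht2 a z σ hz hS hout
  rw [ham, hm]
  have hsz : (sval (σ z) : ℝ) = 0 ∨ (sval (σ z) : ℝ) = 1 := by
    rcases hzv with hv | hv <;> rw [hv]
    · left; norm_num [sval]
    · right; norm_num [sval]
  split_ifs at hg ⊢ with hcond
  · rcases hsz with hv | hv <;> rw [hv] at hg <;> push_cast at hg ⊢ <;> nlinarith
  · have hv : (sval (σ z) : ℝ) = 1 := by
      rcases hAlt with hA | hA
      · rw [hA]; norm_num [sval]
      · exact absurd hA hcond
    rw [hv] at hg
    push_cast at hg ⊢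
    nlinarith

/-- Decomposition with the extra site attached to the rectangle. -/
def adjP (L : ℕ) [NeZero L] (n : ℕ) (σ : Cfg L) : Prop :=
  ∃ (a z : Site L) (b : Bool),
    z ∉ rect L a (cond b n (n + 1)) (cond b (n + 1) n) ∧
    Asites L σ = insert z (rect L a (cond b n (n + 1)) (cond b (n + 1) n)) ∧
    (∀ x ∈ rect L a (cond b n (n + 1)) (cond b (n + 1) n), σ x = 1) ∧
    ∃ y ∈ rect L a (cond b n (n + 1)) (cond b (n + 1) n), nbr L z y

lemma sigma_z_two {n : ℕ} (σ : Cfg L) (hnotRa : σ ∉ setRa L n) (a z : Site L) (b : Bool)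
    (hz : z ∉ rect L a (cond b n (n + 1)) (cond b (n + 1) n))
    (hA : Asites L σ = insert z (rect L a (cond b n (n + 1)) (cond b (n + 1) n)))
    (hS : ∀ x ∈ rect L a (cond b n (n + 1)) (cond b (n + 1) n), σ x = 1)
    (hadj : ∃ y ∈ rect L a (cond b n (n + 1)) (cond b (n + 1) n), nbr L z y) :
    σ z = 2 := by
  rcases asites_z (n := n) σ z _ hA with hv | hv
  · exfalso
    apply hnotRa
    obtain ⟨y, hy, hnb⟩ := hadj
    refine ⟨rect L a (cond b n (n + 1)) (cond b (n + 1) n), z, ?_, hz, hA, hS, hv, y, hy, hnb⟩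
    cases b
    · exact ⟨a, Or.inr rfl⟩
    · exact ⟨a, Or.inl rfl⟩
  · exact hv

lemma gw_le_of_ham {h β c : ℝ} (hβ : 0 ≤ β) (σ : Cfg L) (hham : c ≤ ham L h σ) :
    gw L h β σ ≤ Real.exp (-β * c) := by
  rw [gw]
  apply Real.exp_le_exp.mpr
  have := mul_le_mul_of_nonneg_left hham hβ
  nlinarith

/-- Energy bound: every configuration in `R⁺ \ Rᵃ` has energy at least `Γ + 2`. -/
lemma gw_bound_nonadj {n : ℕ} {h β : ℝ} (h0 : 0 < h) (h2 : h < 2) (hn : 1 ≤ n)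
    (hL : 2 * (n + 2) ≤ L) (hβ : 0 ≤ β) (σ : Cfg L)
    (hσ : σ ∈ setRplus L n) (hnotRa : σ ∉ setRa L n) :
    gw L h β σ ≤ Real.exp (-β * ((4 * ((n : ℝ) + 1) -
      h * (((n * (n + 1) + 1 : ℕ) : ℝ) - (L : ℝ)^2)) + 2)) := by
  obtain ⟨a, z, b, hz, hA, hS⟩ := setRplus_cases σ hσ
  have hzv := asites_z (n := n) σ z _ hA
  have hout := asites_out σ z _ hA
  have hAlt : σ z = 2 ∨ ∀ y ∈ rect L a (cond b n (n + 1)) (cond b (n + 1) n), ¬ nbr L z y := by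
    by_cases hadj : ∀ y ∈ rect L a (cond b n (n + 1)) (cond b (n + 1) n), ¬ nbr L z y
    · exact Or.inr hadj
    · push_neg at hadj
      exact Or.inl (sigma_z_two σ hnotRa a z b hz hA hS hadj)
  apply gw_le_of_ham hβ
  have hlb := ham_lb h0 h2 (s := cond b n (n + 1)) (t := cond b (n + 1) n)
    (by cases b <;> simp <;> omega) (by cases b <;> simp <;> omega)
    (by cases b <;> simp <;> omega) (by cases b <;> simp <;> omega)
    a z σ hz hS hzv hout hAlt
  refine le_trans ?_ hlb
  cases b <;> simp only [Bool.cond_false, Bool.cond_true] <;>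
    split_ifs <;> push_cast <;> nlinarith

/-- Energy bound in the attached case. -/
lemma gw_bound_adj {n : ℕ} {h β : ℝ} (h0 : 0 < h) (h2 : h < 2) (hn : 1 ≤ n)
    (hL : 2 * (n + 2) ≤ L) (hβ : 0 ≤ β) (σ : Cfg L)
    (hadjP : adjP L n σ) (hnotRa : σ ∉ setRa L n) :
    gw L h β σ ≤ Real.exp (-β * ((4 * ((n : ℝ) + 1) -
      h * (((n * (n + 1) + 1 : ℕ) : ℝ) - (L : ℝ)^2)) + 10 - h)) := by
  obtain ⟨a, z, b, hz, hA, hS, hadj⟩ := hadjP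
  have hzv := asites_z (n := n) σ z _ hA
  have hout := asites_out σ z _ hA
  have hz2 : σ z = 2 := sigma_z_two σ hnotRa a z b hz hA hS hadj
  apply gw_le_of_ham hβ
  have hlb := ham_lb h0 h2 (s := cond b n (n + 1)) (t := cond b (n + 1) n)
    (by cases b <;> simp <;> omega) (by cases b <;> simp <;> omega)
    (by cases b <;> simp <;> omega) (by cases b <;> simp <;> omega)
    a z σ hz hS hzv hout (Or.inl hz2)
  have hcond : ¬ ∀ y ∈ rect L a (cond b n (n + 1)) (cond b (n + 1) n), ¬ nbr L z y := by
    push_neg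
    exact hadj
  rw [if_neg hcond] at hlb
  refine le_trans ?_ hlb
  cases b <;> simp only [Bool.cond_false, Bool.cond_true] <;> push_cast <;> nlinarith

end BC
namespace BC

/-- Reconstruction of a configuration from rectangle data. -/
def reconW (L : ℕ) [NeZero L] (n : ℕ) (w : Site L × Site L × Bool × Fin 3) : Cfg L :=
  fun x =>
    if x = w.2.1 then w.2.2.2
    else if x ∈ rect L w.1 (cond w.2.2.1 n (n + 1)) (cond w.2.2.1 (n + 1) n) then 1 else 0

variable {L : ℕ} [NeZero L]

lemma recon_eq {n : ℕ} (σ : Cfg L) (a z : Site L) (b : Bool)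
    (hA : Asites L σ = insert z (rect L a (cond b n (n + 1)) (cond b (n + 1) n)))
    (hS : ∀ x ∈ rect L a (cond b n (n + 1)) (cond b (n + 1) n), σ x = 1) :
    σ = reconW L n (a, z, b, σ z) := by
  have hout := asites_out σ z _ hA
  funext x
  rw [reconW]
  by_cases hxz : x = z
  · subst hxz; rw [if_pos rfl]
  · rw [if_neg hxz]
    by_cases hxR : x ∈ rect L a (cond b n (n + 1)) (cond b (n + 1) n)
    · rw [if_pos hxR]; exact hS x hxR
    · rw [if_neg hxR]; exact hout x hxR hxz

lemma card_filter_Rplus {n : ℕ} (Q : Cfg L → Prop) [DecidablePred Q]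
    (hQ : ∀ σ, Q σ → σ ∈ setRplus L n) :
    (Finset.univ.filter Q).card ≤ 6 * L^4 := by
  classical
  have hex : ∀ σ ∈ Finset.univ.filter Q, ∃ w, σ = reconW L n w := by
    intro σ hσ
    obtain ⟨a, z, b, hz, hA, hS⟩ := setRplus_cases σ (hQ σ (Finset.mem_filter.mp hσ).2)
    exact ⟨(a, z, b, σ z), recon_eq σ a z b hA hS⟩
  have hcard : (Finset.univ.filter Q).card ≤
      Fintype.card (Site L × Site L × Bool × Fin 3) := by
    rw [← Finset.card_univ]
    apply Finset.card_le_card_of_injOn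
      (fun σ => if hσ : ∃ w, σ = reconW L n w then hσ.choose else default)
      (fun σ _ => Finset.mem_univ _)
    intro σ hσ σ' hσ' hff
    have h1 := hex σ hσ
    have h2 := hex σ' hσ'
    simp only [dif_pos h1, dif_pos h2] at hff
    rw [h1.choose_spec, h2.choose_spec, hff]
  refine le_trans hcard (le_of_eq ?_)
  simp only [Fintype.card_prod, card_site, Fintype.card_bool, Fintype.card_fin]
  rw [ZMod.card]
  ring

/-- Neighbour decoding. -/
def zOf {L : ℕ} [NeZero L] (y : Site L) (d : Fin 4) : Site L :=
  if d = 0 then y - ((1 : ZMod L), (0 : ZMod L))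
  else if d = 1 then y + ((1 : ZMod L), (0 : ZMod L))
  else if d = 2 then y - ((0 : ZMod L), (1 : ZMod L))
  else y + ((0 : ZMod L), (1 : ZMod L))

lemma card_filter_adj {n : ℕ} (hL : 2 * (n + 2) ≤ L) (Q : Cfg L → Prop) [DecidablePred Q]
    (hQ : ∀ σ, Q σ → adjP L n σ) :
    (Finset.univ.filter Q).card ≤ 24 * (n + 1)^2 * L^2 := by
  classical
  set W := fun (w : Site L × ((ℕ × ℕ) × (Fin 4 × Bool × Fin 3))) =>
    reconW L n (w.1, zOf (w.1.1 + (w.2.1.1 : ZMod L), w.1.2 + (w.2.1.2 : ZMod L)) w.2.2.1,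
      w.2.2.2.1, w.2.2.2.2) with hW
  have hex : ∀ σ ∈ Finset.univ.filter Q,
      ∃ w, (σ = W w ∧ w.2.1.1 < n + 1 ∧ w.2.1.2 < n + 1) := by
    intro σ hσ
    obtain ⟨a, z, b, hz, hA, hS, y, hy, hnb⟩ := hQ σ (Finset.mem_filter.mp hσ).2
    have hyrep : ∃ i j : ℕ, i < n + 1 ∧ j < n + 1 ∧ y = (a.1 + (i : ZMod L), a.2 + (j : ZMod L)) := by
      rw [rect, Finset.mem_image] at hy
      obtain ⟨⟨i, j⟩, hij, rfl⟩ := hy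
      rw [Finset.mem_product, Finset.mem_range, Finset.mem_range] at hij
      exact ⟨i, j, by cases b <;> simp at hij <;> omega,
        by cases b <;> simp at hij <;> omega, rfl⟩
    obtain ⟨i, j, hi, hj, rfl⟩ := hyrep
    have hzd : ∃ d : Fin 4, z = zOf (a.1 + (i : ZMod L), a.2 + (j : ZMod L)) d := by
      rcases hnb with hh | hh | hh | hh
      · exact ⟨0, by rw [zOf, if_pos rfl, hh]; ring⟩
      · exact ⟨1, by rw [zOf, if_neg (by decide : ¬(1 : Fin 4) = 0), if_pos rfl, hh]; ring⟩
      · exact ⟨2, by rw [zOf, if_neg (by decide : ¬(2 : Fin 4) = 0),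
          if_neg (by decide : ¬(2 : Fin 4) = 1), if_pos rfl, hh]; ring⟩
      · exact ⟨3, by rw [zOf, if_neg (by decide : ¬(3 : Fin 4) = 0),
          if_neg (by decide : ¬(3 : Fin 4) = 1), if_neg (by decide : ¬(3 : Fin 4) = 2), hh]; ring⟩
    obtain ⟨d, hd⟩ := hzd
    refine ⟨(a, ((i, j), (d, b, σ z))), ?_, hi, hj⟩
    rw [hW]
    simp only
    rw [← hd]
    exact recon_eq σ a z b hA hS
  have hcard : (Finset.univ.filter Q).card ≤
      ((Finset.univ : Finset (Site L)) ×ˢ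
        ((Finset.range (n + 1) ×ˢ Finset.range (n + 1)) ×ˢ
          (Finset.univ : Finset (Fin 4 × Bool × Fin 3)))).card := by
    apply Finset.card_le_card_of_injOn
      (fun σ => if hσ : ∃ w, (σ = W w ∧ w.2.1.1 < n + 1 ∧ w.2.1.2 < n + 1)
        then hσ.choose else default)
    · intro σ hσ
      have h1 := hex σ hσ
      simp only [dif_pos h1]
      obtain ⟨-, hi, hj⟩ := h1.choose_spec
      refine Finset.mem_product.mpr ⟨Finset.mem_univ _, ?_⟩
      refine Finset.mem_product.mpr ⟨?_, Finset.mem_univ _⟩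
      exact Finset.mem_product.mpr ⟨Finset.mem_range.mpr hi, Finset.mem_range.mpr hj⟩
    · intro σ hσ σ' hσ' hff
      have h1 := hex σ hσ
      have h2 := hex σ' hσ'
      simp only [dif_pos h1, dif_pos h2] at hff
      rw [h1.choose_spec.1, h2.choose_spec.1, hff]
  refine le_trans hcard (le_of_eq ?_)
  simp only [Finset.card_product, Finset.card_range, Finset.card_univ,
    Fintype.card_prod, Fintype.card_fin, Fintype.card_bool, ZMod.card]
  ring

end BC
set_option maxHeartbeats 1000000 in
/-- Assertion (fasA) : bound on the contribution of `B₂ = R⁺ \ Rᵃ` to the Dirichlet form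
of the indicator of the bad boundary of the valley of `-1`. -/
theorem stmt_4 (h : ℝ) (h0 : 0 < h) (h2 : h < 2)
    (hirr : ∀ m : ℤ, (2 : ℝ) / h ≠ (m : ℝ)) :
    ∃ C0 : ℝ, 0 < C0 ∧ ∀ β : ℝ, C0 ≤ β → ∀ (L : ℕ) [NeZero L],
      2 * (BC.n0 h + 2) ≤ L →
      (∑ σ : BC.Cfg L, ∑ τ : BC.Cfg L,
        if σ ∈ BC.setRplus L (BC.n0 h) \ BC.setRa L (BC.n0 h) ∧
           τ ∈ BC.valleyM L (BC.n0 h) \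
              ((BC.setB L (BC.n0 h) \ BC.setR L (BC.n0 h)) ∪
               (BC.setRplus L (BC.n0 h) \ BC.setRa L (BC.n0 h))) ∧
           BC.oneDiff L σ τ
        then min (BC.gw L h β σ) (BC.gw L h β τ) else 0)
      ≤ C0 * (L : ℝ) ^ 2 * Real.exp (-β * BC.GammaC L h) *
          ((L : ℝ) ^ 2 * Real.exp (-2 * β) + Real.exp (-(10 - h) * β)) := by
  classical
  set n := BC.n0 h with hn
  have hn1 : 1 ≤ n := by
    rw [hn, BC.n0]
    have h1 : (1 : ℝ) ≤ 2 / h := by rw [le_div_iff₀ h0]; linarith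
    exact Nat.le_floor (by exact_mod_cast h1)
  refine ⟨600 * ((n : ℝ) + 1)^4, by positivity, ?_⟩
  intro β hβ L _ hL
  have hβ0 : (0 : ℝ) ≤ β := le_trans (by positivity) hβ
  set N1 : ℕ := n * (n + 1) + 1 with hN1def
  set Γ : ℝ := BC.GammaC L h with hΓ
  set E2 : ℝ := Real.exp (-β * (Γ + 2)) with hE2
  set E10 : ℝ := Real.exp (-β * (Γ + 10 - h)) with hE10
  have hstep1 : ∀ σ : BC.Cfg L,
      (∑ τ : BC.Cfg L,
        if σ ∈ BC.setRplus L n \ BC.setRa L n ∧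
           τ ∈ BC.valleyM L n \
              ((BC.setB L n \ BC.setR L n) ∪ (BC.setRplus L n \ BC.setRa L n)) ∧
           BC.oneDiff L σ τ
        then min (BC.gw L h β σ) (BC.gw L h β τ) else 0) ≤
      (if σ ∈ BC.setRplus L n \ BC.setRa L n then 3 * (N1 : ℝ) * BC.gw L h β σ else 0) := by
    intro σ
    by_cases hσ : σ ∈ BC.setRplus L n \ BC.setRa L n
    · rw [if_pos hσ]
      obtain ⟨a, z, b, hz, hA, hS⟩ := BC.setRplus_cases σ hσ.1
      have hNsz := BC.nsz_of_asites hL σ a z b hz hA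
      rw [hN1def]
      refine le_trans (Finset.sum_le_sum fun τ _ => ?_) (BC.tau_count hL h β σ hNsz)
      by_cases hc : τ ∈ BC.valleyM L n ∧ BC.oneDiff L σ τ
      · rw [if_pos hc]
        split_ifs with hfull
        · exact le_refl _
        · exact le_min (le_of_lt (Real.exp_pos _)) (le_of_lt (Real.exp_pos _))
      · rw [if_neg hc,
          if_neg (fun hfull => hc ⟨Set.mem_of_mem_diff hfull.2.1, hfull.2.2⟩)]
    · rw [if_neg hσ]
      apply le_of_eq
      apply Finset.sum_eq_zero
      intro τ _
      rw [if_neg]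
      rintro ⟨h1', -, -⟩
      exact hσ h1'
  have hsplit2 : ∀ σ : BC.Cfg L,
      (if σ ∈ BC.setRplus L n \ BC.setRa L n then 3 * (N1 : ℝ) * BC.gw L h β σ else 0) =
      3 * (N1 : ℝ) *
        ((if σ ∈ BC.setRplus L n \ BC.setRa L n ∧ BC.adjP L n σ then BC.gw L h β σ else 0) +
         (if σ ∈ BC.setRplus L n \ BC.setRa L n ∧ ¬ BC.adjP L n σ then BC.gw L h β σ
          else 0)) := by
    intro σ
    by_cases h1' : σ ∈ BC.setRplus L n \ BC.setRa L n <;>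
      by_cases h2' : BC.adjP L n σ <;> simp [h1', h2'] <;> ring
  have hadjsum : ∑ σ : BC.Cfg L,
      (if σ ∈ BC.setRplus L n \ BC.setRa L n ∧ BC.adjP L n σ then BC.gw L h β σ else 0) ≤
      ((24 * (n + 1)^2 * L^2 : ℕ) : ℝ) * E10 := by
    rw [← Finset.sum_filter]
    have hb : ∀ σ ∈ Finset.univ.filter
        (fun σ => σ ∈ BC.setRplus L n \ BC.setRa L n ∧ BC.adjP L n σ),
        BC.gw L h β σ ≤ E10 := by
      intro σ hσ
      obtain ⟨hB, hadj⟩ := (Finset.mem_filter.mp hσ).2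
      have := BC.gw_bound_adj (β := β) h0 h2 hn1 hL hβ0 σ hadj hB.2
      refine le_trans this (le_of_eq ?_)
      rw [hE10, hΓ]
      congr 1
      all_goals (unfold BC.GammaC; rw [← hn])
    calc ∑ σ ∈ Finset.univ.filter
          (fun σ => σ ∈ BC.setRplus L n \ BC.setRa L n ∧ BC.adjP L n σ), BC.gw L h β σ
        ≤ (Finset.univ.filter
            (fun σ => σ ∈ BC.setRplus L n \ BC.setRa L n ∧ BC.adjP L n σ)).card • E10 :=
          Finset.sum_le_card_nsmul _ _ _ hb
      _ ≤ ((24 * (n + 1)^2 * L^2 : ℕ) : ℝ) * E10 := by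
          rw [nsmul_eq_mul]
          apply mul_le_mul_of_nonneg_right _ (le_of_lt (Real.exp_pos _))
          exact_mod_cast BC.card_filter_adj hL
            (fun σ => σ ∈ BC.setRplus L n \ BC.setRa L n ∧ BC.adjP L n σ)
            (fun σ hσ => hσ.2)
  have hnonadjsum : ∑ σ : BC.Cfg L,
      (if σ ∈ BC.setRplus L n \ BC.setRa L n ∧ ¬ BC.adjP L n σ then BC.gw L h β σ
       else 0) ≤ ((6 * L^4 : ℕ) : ℝ) * E2 := by
    rw [← Finset.sum_filter]
    have hb : ∀ σ ∈ Finset.univ.filter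
        (fun σ => σ ∈ BC.setRplus L n \ BC.setRa L n ∧ ¬ BC.adjP L n σ),
        BC.gw L h β σ ≤ E2 := by
      intro σ hσ
      obtain ⟨hB, -⟩ := (Finset.mem_filter.mp hσ).2
      have := BC.gw_bound_nonadj (β := β) h0 h2 hn1 hL hβ0 σ hB.1 hB.2
      refine le_trans this (le_of_eq ?_)
      rw [hE2, hΓ]
      congr 1
      all_goals (unfold BC.GammaC; rw [← hn])
    calc ∑ σ ∈ Finset.univ.filter
          (fun σ => σ ∈ BC.setRplus L n \ BC.setRa L n ∧ ¬ BC.adjP L n σ), BC.gw L h β σ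
        ≤ (Finset.univ.filter
            (fun σ => σ ∈ BC.setRplus L n \ BC.setRa L n ∧ ¬ BC.adjP L n σ)).card • E2 :=
          Finset.sum_le_card_nsmul _ _ _ hb
      _ ≤ ((6 * L^4 : ℕ) : ℝ) * E2 := by
          rw [nsmul_eq_mul]
          apply mul_le_mul_of_nonneg_right _ (le_of_lt (Real.exp_pos _))
          exact_mod_cast BC.card_filter_Rplus
            (fun σ => σ ∈ BC.setRplus L n \ BC.setRa L n ∧ ¬ BC.adjP L n σ)
            (fun σ hσ => Set.mem_of_mem_diff hσ.1)
  have hmain : (∑ σ : BC.Cfg L, ∑ τ : BC.Cfg L,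
      if σ ∈ BC.setRplus L n \ BC.setRa L n ∧
         τ ∈ BC.valleyM L n \
            ((BC.setB L n \ BC.setR L n) ∪ (BC.setRplus L n \ BC.setRa L n)) ∧
         BC.oneDiff L σ τ
      then min (BC.gw L h β σ) (BC.gw L h β τ) else 0) ≤
      3 * (N1 : ℝ) * (((24 * (n + 1)^2 * L^2 : ℕ) : ℝ) * E10 +
        ((6 * L^4 : ℕ) : ℝ) * E2) := by
    calc (∑ σ : BC.Cfg L, ∑ τ : BC.Cfg L,
        if σ ∈ BC.setRplus L n \ BC.setRa L n ∧
           τ ∈ BC.valleyM L n \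
              ((BC.setB L n \ BC.setR L n) ∪ (BC.setRplus L n \ BC.setRa L n)) ∧
           BC.oneDiff L σ τ
        then min (BC.gw L h β σ) (BC.gw L h β τ) else 0)
        ≤ ∑ σ : BC.Cfg L,
            (if σ ∈ BC.setRplus L n \ BC.setRa L n then 3 * (N1 : ℝ) * BC.gw L h β σ
             else 0) := Finset.sum_le_sum fun σ _ => hstep1 σ
      _ = 3 * (N1 : ℝ) *
            ((∑ σ : BC.Cfg L, (if σ ∈ BC.setRplus L n \ BC.setRa L n ∧ BC.adjP L n σ
                then BC.gw L h β σ else 0)) +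
             (∑ σ : BC.Cfg L, (if σ ∈ BC.setRplus L n \ BC.setRa L n ∧ ¬ BC.adjP L n σ
                then BC.gw L h β σ else 0))) := by
          rw [Finset.sum_congr rfl (fun σ _ => hsplit2 σ), ← Finset.mul_sum,
            Finset.sum_add_distrib]
      _ ≤ _ := by
          apply mul_le_mul_of_nonneg_left (add_le_add hadjsum hnonadjsum) (by positivity)
  refine le_trans hmain ?_
  have he2 : E2 = Real.exp (-β * Γ) * Real.exp (-2 * β) := by
    rw [hE2, ← Real.exp_add]; congr 1; ring
  have he10 : E10 = Real.exp (-β * Γ) * Real.exp (-(10 - h) * β) := by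
    rw [hE10, ← Real.exp_add]; congr 1; ring
  rw [he2, he10]
  have hN1le : ((N1 : ℕ) : ℝ) ≤ ((n : ℝ) + 1)^2 := by
    rw [hN1def]; push_cast; nlinarith [Nat.cast_nonneg (α := ℝ) n]
  have hg1 : (1 : ℝ) ≤ ((n : ℝ) + 1) := by
    have := Nat.cast_nonneg (α := ℝ) n; linarith
  have hP1 : (0 : ℝ) ≤ (L : ℝ)^2 * (Real.exp (-β * Γ) * Real.exp (-(10 - h) * β)) := by
    positivity
  have hP2 : (0 : ℝ) ≤ (L : ℝ)^4 * (Real.exp (-β * Γ) * Real.exp (-2 * β)) := by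
    positivity
  have c1 : 3 * ((N1 : ℕ) : ℝ) * (24 * ((n : ℝ) + 1)^2) ≤ 600 * ((n : ℝ) + 1)^4 := by
    nlinarith [hN1le, hg1, sq_nonneg ((n : ℝ) + 1)]
  have h24 : ((n : ℝ) + 1)^2 ≤ ((n : ℝ) + 1)^4 :=
    pow_le_pow_right₀ hg1 (by norm_num)
  have c2 : 3 * ((N1 : ℕ) : ℝ) * 6 ≤ 600 * ((n : ℝ) + 1)^4 := by
    nlinarith [hN1le, h24, hg1]
  have hQ1 := mul_le_mul_of_nonneg_right c1 hP1
  have hQ2 := mul_le_mul_of_nonneg_right c2 hP2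
  push_cast
  push_cast at hQ1 hQ2
  nlinarith [hQ1, hQ2]
end
end
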